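/- arXiv:0712.2908 — 3 statements merged into one kernel-verified Lean document; each statement's English description precedes it below -/
import Mathlib

section
/- Let G be a finite 2-connected series-parallel graph and let (u, v) be a pair of ends for G. Then G is {u, v}-exit 2-copwin. -/
open SimpleGraph

variable {V : Type*}



/-- A move in the game: pass or slide along an edge. -/
def Step (G : SimpleGraph V) (a b : V) : Prop := a = b ∨ G.Adj a b

/-- A (full-information, positional) strategy for `k` cops. -/
structure CopStrategy (G : SimpleGraph V) (k : ℕ) where
  init : Fin k → V
  move : (Fin k → V) → V → (Fin k → V)
  valid : ∀ c r i, Step G (c i) (move c r i)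

/-- A (full-information, positional) strategy for the robber. -/
structure RobberStrategy (G : SimpleGraph V) (k : ℕ) where
  init : (Fin k → V) → V
  move : (Fin k → V) → V → V
  valid : ∀ c r, Step G r (move c r)

/-- State of the game after round `n`: cop positions and robber position.
Cops move first in each round. -/
def play {G : SimpleGraph V} {k : ℕ} (σ : CopStrategy G k) (τ : RobberStrategy G k) :
    ℕ → (Fin k → V) × V
  | 0 => (σ.init, τ.init σ.init)
  | n + 1 =>
    let p := play σ τ n
    let c' := σ.move p.1 p.2
    (c', τ.move c' p.2)

/-- At time `n`, a cop occupies the robber's vertex (either the robber stands on a cop,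
or the cops' move at round `n+1` lands on him). -/
def Caught {G : SimpleGraph V} {k : ℕ} (σ : CopStrategy G k) (τ : RobberStrategy G k)
    (n : ℕ) : Prop :=
  ∃ i, (play σ τ n).1 i = (play σ τ n).2 ∨ (play σ τ (n + 1)).1 i = (play σ τ n).2

/-- `G` is `k`-copwin: `k` cops have a winning strategy. -/
def CopWin (G : SimpleGraph V) (k : ℕ) : Prop :=
  ∃ σ : CopStrategy G k, ∀ τ : RobberStrategy G k, ∃ n, Caught σ τ n

/-- After the cops' move of round `m+1`, the robber stands alone on an exit vertex. -/
def Escaped {G : SimpleGraph V} {k : ℕ} (X : Set V) (σ : CopStrategy G k)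
    (τ : RobberStrategy G k) (m : ℕ) : Prop :=
  (play σ τ m).2 ∈ X ∧ ∀ i, (play σ τ (m + 1)).1 i ≠ (play σ τ m).2

/-- `G` is `X`-exit `k`-copwin: however the robber places the cops (subject to all exits
being occupied) and himself, the cops can catch the robber before he ever stands alone
on an exit vertex after a cops' move. -/
def ExitCopWin (G : SimpleGraph V) (k : ℕ) (X : Set V) : Prop :=
  ∀ c₀ : Fin k → V, X ⊆ Set.range c₀ →
    ∃ σ : CopStrategy G k, σ.init = c₀ ∧
      ∀ τ : RobberStrategy G k, ∃ n, Caught σ τ n ∧ ∀ m ≤ n, ¬ Escaped X σ τ m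



/-- `G` has a `K₄` minor: four nonempty, pairwise disjoint, connected branch sets,
pairwise joined by an edge. -/
def HasK4Minor (G : SimpleGraph V) : Prop :=
  ∃ B : Fin 4 → Set V,
    (∀ i, (B i).Nonempty) ∧
    (∀ i, (G.induce (B i)).Connected) ∧
    (∀ i j, i ≠ j → Disjoint (B i) (B j)) ∧
    (∀ i j, i ≠ j → ∃ a ∈ B i, ∃ b ∈ B j, G.Adj a b)

/-- A multigraph on a finite set of natural-number vertices, with a multiset of edges. -/
structure Multigraph where
  verts : Finset ℕ
  edges : Multiset (Sym2 ℕ)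

/-- The underlying simple graph of a multigraph (on the ambient type `ℕ`). -/
def Multigraph.toSimple (M : Multigraph) : SimpleGraph ℕ where
  Adj a b := a ≠ b ∧ s(a, b) ∈ M.edges
  symm := ⟨fun a b h => ⟨h.1.symm, by rw [Sym2.eq_swap]; exact h.2⟩⟩
  loopless := ⟨fun a h => h.1 rfl⟩

/-- The simple graph on the vertex set of `M` on which the game is played. -/
def Multigraph.game (M : Multigraph) : SimpleGraph (↑M.verts : Set ℕ) :=
  M.toSimple.induce ↑M.verts

/-- Path-like series-parallel multigraphs with pair of ends `u`, `v`: obtained from the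
single edge `uv` by repeatedly duplicating an edge or subdividing an edge. -/
inductive PathLike : Multigraph → ℕ → ℕ → Prop where
  | base (u v : ℕ) (huv : u ≠ v) : PathLike ⟨{u, v}, {s(u, v)}⟩ u v
  | dup {M : Multigraph} {u v : ℕ} (e : Sym2 ℕ) (he : e ∈ M.edges)
      (h : PathLike M u v) : PathLike ⟨M.verts, e ::ₘ M.edges⟩ u v
  | subdiv {M : Multigraph} {u v : ℕ} (x y : ℕ) (he : s(x, y) ∈ M.edges)
      (w : ℕ) (hw : w ∉ M.verts) (h : PathLike M u v) :
      PathLike ⟨insert w M.verts, s(x, w) ::ₘ s(w, y) ::ₘ M.edges.erase s(x, y)⟩ u v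



/-- `v` is a cut-vertex of the connected graph `G`: deleting it disconnects `G`. -/
def CutVertex (G : SimpleGraph V) (v : V) : Prop :=
  G.Connected ∧ ¬ ((⊤ : G.Subgraph).deleteVerts {v}).coe.Connected

/-- A set of vertices inducing a connected subgraph without a cut-vertex of its own
(for sets of at most two vertices only connectivity is required). -/
def IsBiconnSet (G : SimpleGraph V) (B : Set V) : Prop :=
  (G.induce B).Connected ∧ ∀ v ∈ B, B.ncard ≤ 2 ∨ (G.induce (B \ {v})).Connected

/-- A block of `G`: a maximal set of at least two vertices inducing a subgraph that is
2-connected or a bridge. -/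
def IsBlock (G : SimpleGraph V) (B : Set V) : Prop :=
  2 ≤ B.ncard ∧ IsBiconnSet G B ∧
    ∀ B' : Set V, B ⊆ B' → 2 ≤ B'.ncard → IsBiconnSet G B' → B' = B

/-- The interior of a block: its vertices that are not cut-vertices of `G`. -/
def BlockInterior (G : SimpleGraph V) (B : Set V) : Set V :=
  {v ∈ B | ¬ CutVertex G v}

/-- `G` is 2-connected (in the weak sense, including a single edge): it is connected
and has no cut-vertex. -/
def TwoConnected (G : SimpleGraph V) : Prop :=
  G.Connected ∧ ∀ v : V, ((⊤ : G.Subgraph).deleteVerts {v}).coe.Connected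

/-- `c'` is one step from `c` toward `y` along a shortest path (passing if `c = y`). -/
def StepToward (G : SimpleGraph V) (y c c' : V) : Prop :=
  (c' = c ∧ c = y) ∨ (G.Adj c c' ∧ G.dist y c' + 1 = G.dist y c)

namespace CopAux

open SimpleGraph
attribute [local instance] Classical.propDecidable
variable {V : Type*}

/-- Fueled attractor: the cops (to move, at configuration `c` facing robber at `r`)
can capture within `n` rounds, never letting the robber stand alone on an exit. -/
def WinF (G : SimpleGraph V) (X : Set V) : ℕ → (Fin 2 → V) → V → Prop
  | 0, c, r => ∃ i, Step G (c i) r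
  | n+1, c, r => (∃ i, Step G (c i) r) ∨
      (r ∉ X ∧ ∃ c' : Fin 2 → V, (∀ i, Step G (c i) (c' i)) ∧
        ∀ r', Step G r r' → WinF G X n c' r')

lemma winF_succ {G : SimpleGraph V} {X : Set V} {n c r} :
    WinF G X (n+1) c r ↔ ((∃ i, Step G (c i) r) ∨
      (r ∉ X ∧ ∃ c' : Fin 2 → V, (∀ i, Step G (c i) (c' i)) ∧
        ∀ r', Step G r r' → WinF G X n c' r')) := Iff.rfl

lemma winF_zero {G : SimpleGraph V} {X : Set V} {c r} :
    WinF G X 0 c r ↔ ∃ i, Step G (c i) r := Iff.rfl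

lemma winF_capture {G : SimpleGraph V} {X : Set V} {c r} (n : ℕ)
    (h : ∃ i, Step G (c i) r) : WinF G X n c r := by
  cases n with
  | zero => exact h
  | succ n => exact Or.inl h

lemma winF_mono {G : SimpleGraph V} {X : Set V} :
    ∀ {n m : ℕ}, n ≤ m → ∀ {c r}, WinF G X n c r → WinF G X m c r := by
  intro n
  induction n with
  | zero =>
    intro m _ c r h
    exact winF_capture m h
  | succ n ih =>
    intro m hm c r h
    obtain ⟨m, rfl⟩ : ∃ k, m = k + 1 := ⟨m - 1, by omega⟩
    rcases h with h | ⟨hx, c', hc', hstep⟩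
    · exact Or.inl h
    · exact Or.inr ⟨hx, c', hc', fun r' hr' => ih (by omega) (hstep r' hr')⟩

/-- From a non-capture winning position, extract a cop move that decreases the fuel. -/
lemma winF_step {G : SimpleGraph V} {X : Set V} {n : ℕ} {c r}
    (h : WinF G X n c r) (hcap : ¬ ∃ i, Step G (c i) r) :
    r ∉ X ∧ ∃ c' : Fin 2 → V, (∀ i, Step G (c i) (c' i)) ∧
        ∀ r', Step G r r' → WinF G X (n-1) c' r' := by
  cases n with
  | zero => exact absurd h hcap
  | succ n =>
    rcases h with h | ⟨hx, c', hc', hstep⟩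
    · exact absurd h hcap
    · exact ⟨hx, c', hc', hstep⟩

section extraction

variable {G : SimpleGraph V} {X : Set V}

/-- The positional strategy extracted from the attractor. -/
noncomputable def attractorMove (G : SimpleGraph V) (X : Set V) (c : Fin 2 → V) (r : V) :
    Fin 2 → V :=
  if hcap : ∃ i, Step G (c i) r then (fun i => if Step G (c i) r then r else c i)
  else if hw : ∃ n, WinF G X n c r then
    Classical.choose (winF_step (Nat.find_spec hw) hcap).2
  else c

lemma attractorMove_valid (c : Fin 2 → V) (r : V) (i : Fin 2) :
    Step G (c i) (attractorMove G X c r i) := by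
  unfold attractorMove
  by_cases hcap : ∃ i, Step G (c i) r
  · rw [dif_pos hcap]
    by_cases h : Step G (c i) r
    · rw [if_pos h]; exact h
    · rw [if_neg h]; exact Or.inl rfl
  · rw [dif_neg hcap]
    by_cases hw : ∃ n, WinF G X n c r
    · rw [dif_pos hw]
      exact (Classical.choose_spec (winF_step (Nat.find_spec hw) hcap).2).1 i
    · rw [dif_neg hw]; exact Or.inl rfl

/-- The extracted strategy. -/
noncomputable def attractorStrategy (G : SimpleGraph V) (X : Set V) (c₀ : Fin 2 → V) :
    CopStrategy G 2 :=
  ⟨c₀, attractorMove G X, fun c r i => attractorMove_valid c r i⟩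

lemma attractorMove_cap {c : Fin 2 → V} {r : V} (hcap : ∃ i, Step G (c i) r) :
    ∃ i, attractorMove G X c r i = r := by
  obtain ⟨i, hi⟩ := hcap
  refine ⟨i, ?_⟩
  unfold attractorMove
  rw [dif_pos ⟨i, hi⟩, if_pos hi]

lemma attractorMove_step {c : Fin 2 → V} {r : V}
    (hw : ∃ n, WinF G X n c r) (hcap : ¬ ∃ i, Step G (c i) r) :
    r ∉ X ∧ ∀ r', Step G r r' →
      WinF G X (Nat.find hw - 1) (attractorMove G X c r) r' := by
  refine ⟨(winF_step (Nat.find_spec hw) hcap).1, ?_⟩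
  intro r' hr'
  have := (Classical.choose_spec (winF_step (Nat.find_spec hw) hcap).2).2 r' hr'
  unfold attractorMove
  rw [dif_neg hcap, dif_pos hw]
  exact this

/-- Main extraction: if every robber position is in the attractor for initial cop
configuration `c₀`, the cops win the exit game from `c₀`. -/
theorem winF_exit (c₀ : Fin 2 → V)
    (h : ∀ r, ∃ n, WinF G X n c₀ r) :
    ∃ σ : CopStrategy G 2, σ.init = c₀ ∧
      ∀ τ : RobberStrategy G 2, ∃ n, Caught σ τ n ∧ ∀ m ≤ n, ¬ Escaped X σ τ m := by
  classical
  refine ⟨attractorStrategy G X c₀, rfl, ?_⟩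
  intro τ
  set σ := attractorStrategy G X c₀ with hσ
  -- key invariant-driven recursion on the fuel
  have key : ∀ (k m : ℕ) (hw : ∃ n, WinF G X n (play σ τ m).1 (play σ τ m).2),
      Nat.find hw ≤ k →
      ∃ n, m ≤ n ∧ Caught σ τ n ∧ ∀ j, m ≤ j → j ≤ n → ¬ Escaped X σ τ j := by
    intro k
    induction k with
    | zero =>
      intro m hw hk
      -- fuel 0 means capture is available now
      have h0 := Nat.find_spec hw
      have heq : Nat.find hw = 0 := Nat.le_zero.mp hk
      rw [heq] at h0
      have hcap : ∃ i, Step G ((play σ τ m).1 i) (play σ τ m).2 := h0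
      obtain ⟨i, hi⟩ := attractorMove_cap (X := X) hcap
      have hplay : (play σ τ (m+1)).1 = attractorMove G X (play σ τ m).1 (play σ τ m).2 := rfl
      refine ⟨m, le_rfl, ⟨i, Or.inr (by rw [hplay]; exact hi)⟩, ?_⟩
      intro j hj hj'
      have : j = m := le_antisymm hj' hj
      subst this
      intro hesc
      exact hesc.2 i (by rw [hplay]; exact hi)
    | succ k ih =>
      intro m hw hk
      by_cases hcap : ∃ i, Step G ((play σ τ m).1 i) (play σ τ m).2
      · obtain ⟨i, hi⟩ := attractorMove_cap (X := X) hcap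
        have hplay : (play σ τ (m+1)).1 = attractorMove G X (play σ τ m).1 (play σ τ m).2 := rfl
        refine ⟨m, le_rfl, ⟨i, Or.inr (by rw [hplay]; exact hi)⟩, ?_⟩
        intro j hj hj'
        have : j = m := le_antisymm hj' hj
        subst this
        intro hesc
        exact hesc.2 i (by rw [hplay]; exact hi)
      · obtain ⟨hnx, hstep⟩ := attractorMove_step hw hcap
        have hplay : (play σ τ (m+1)).1 = attractorMove G X (play σ τ m).1 (play σ τ m).2 := rfl
        have hr' : (play σ τ (m+1)).2 =
            τ.move (play σ τ (m+1)).1 (play σ τ m).2 := rfl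
        have hrstep : Step G (play σ τ m).2 (play σ τ (m+1)).2 := by
          rw [hr']; exact τ.valid _ _
        have hw' : ∃ n, WinF G X n (play σ τ (m+1)).1 (play σ τ (m+1)).2 := by
          refine ⟨Nat.find hw - 1, ?_⟩
          rw [hplay]
          exact hstep _ hrstep
        -- the fuel strictly decreases
        have hfind0 : Nat.find hw ≠ 0 := by
          intro h0
          exact hcap (by have := Nat.find_spec hw; rw [h0] at this; exact this)
        have hle : Nat.find hw' ≤ Nat.find hw - 1 := by
          apply Nat.find_le
          rw [hplay]
          exact hstep _ hrstep
        obtain ⟨n, hn, hcaught, hsafe⟩ := ih (m+1) hw' (by omega)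
        refine ⟨n, by omega, hcaught, ?_⟩
        intro j hj hj'
        rcases Nat.eq_or_lt_of_le hj with rfl | hj2
        · intro hesc
          exact hnx hesc.1
        · exact hsafe j (by omega) hj'
  have hw0 : ∃ n, WinF G X n (play σ (τ) 0).1 (play σ τ 0).2 := by
    have : (play σ τ 0).1 = c₀ := rfl
    rw [this]
    exact h _
  obtain ⟨n, _, hcaught, hsafe⟩ := key (Nat.find hw0) 0 hw0 le_rfl
  exact ⟨n, hcaught, fun m hm => hsafe m (Nat.zero_le m) hm⟩

end extraction

end CopAux
namespace CopAux

/-! ### Basic facts about `PathLike` multigraphs -/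

lemma pathLike_ne {M : Multigraph} {u v : ℕ} (h : PathLike M u v) : u ≠ v := by
  induction h with
  | base u v huv => exact huv
  | dup e he h ih => exact ih
  | subdiv x y he w hw h ih => exact ih

lemma pathLike_mem_left {M : Multigraph} {u v : ℕ} (h : PathLike M u v) : u ∈ M.verts := by
  induction h with
  | base u v huv => simp
  | dup e he h ih => exact ih
  | subdiv x y he w hw h ih => exact Finset.mem_insert_of_mem ih

lemma pathLike_mem_right {M : Multigraph} {u v : ℕ} (h : PathLike M u v) : v ∈ M.verts := by
  induction h with
  | base u v huv => simp
  | dup e he h ih => exact ih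
  | subdiv x y he w hw h ih => exact Finset.mem_insert_of_mem ih

lemma pathLike_edge_mem {M : Multigraph} {u v : ℕ} (h : PathLike M u v) :
    ∀ a b : ℕ, s(a, b) ∈ M.edges → a ∈ M.verts ∧ b ∈ M.verts := by
  induction h with
  | base u v huv =>
    intro a b hab
    simp only [Multiset.mem_singleton] at hab
    rcases Sym2.eq_iff.mp hab with ⟨rfl, rfl⟩ | ⟨rfl, rfl⟩ <;> simp
  | dup e he h ih =>
    intro a b hab
    rcases Multiset.mem_cons.mp hab with rfl | hab
    · exact ih a b he
    · exact ih a b hab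
  | subdiv x y he w hw h ih =>
    intro a b hab
    have hx := (ih x y he).1
    have hy := (ih x y he).2
    rcases Multiset.mem_cons.mp hab with hab | hab
    · rcases Sym2.eq_iff.mp hab with ⟨rfl, rfl⟩ | ⟨rfl, rfl⟩
      · exact ⟨Finset.mem_insert_of_mem hx, Finset.mem_insert_self _ _⟩
      · exact ⟨Finset.mem_insert_self _ _, Finset.mem_insert_of_mem hx⟩
    rcases Multiset.mem_cons.mp hab with hab | hab
    · rcases Sym2.eq_iff.mp hab with ⟨rfl, rfl⟩ | ⟨rfl, rfl⟩
      · exact ⟨Finset.mem_insert_self _ _, Finset.mem_insert_of_mem hy⟩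
      · exact ⟨Finset.mem_insert_of_mem hy, Finset.mem_insert_self _ _⟩
    · have := ih a b (Multiset.mem_of_mem_erase hab)
      exact ⟨Finset.mem_insert_of_mem this.1, Finset.mem_insert_of_mem this.2⟩

lemma pathLike_card_pos {M : Multigraph} {u v : ℕ} (h : PathLike M u v) :
    0 < Multiset.card M.edges := by
  induction h with
  | base u v huv => simp
  | dup e he h ih => simp
  | subdiv x y he w hw h ih => simp

/-! ### Series / parallel gluing data -/

/-- Parallel decomposition of a path-like multigraph. -/
structure ParGlue (M M₁ M₂ : Multigraph) (u v : ℕ) : Prop where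
  pl₁ : PathLike M₁ u v
  pl₂ : PathLike M₂ u v
  verts : M.verts = M₁.verts ∪ M₂.verts
  inter : M₁.verts ∩ M₂.verts = {u, v}
  edges : M.edges = M₁.edges + M₂.edges

/-- Series decomposition of a path-like multigraph, with midpoint `w`. -/
structure SerGlue (M M₁ M₂ : Multigraph) (u w v : ℕ) : Prop where
  pl₁ : PathLike M₁ u w
  pl₂ : PathLike M₂ w v
  verts : M.verts = M₁.verts ∪ M₂.verts
  inter : M₁.verts ∩ M₂.verts = {w}
  edges : M.edges = M₁.edges + M₂.edges

/-- Every path-like multigraph is a single edge, a parallel gluing, or a series gluing. -/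
theorem pathLike_decomp {M : Multigraph} {u v : ℕ} (h : PathLike M u v) :
    (M = ⟨{u, v}, {s(u, v)}⟩) ∨
    (∃ M₁ M₂, ParGlue M M₁ M₂ u v) ∨
    (∃ M₁ M₂ w, SerGlue M M₁ M₂ u w v) := by
  induction h with
  | base u v huv => exact Or.inl rfl
  | @dup M u v e he h ih =>
    rcases ih with hM | ⟨M₁, M₂, hg⟩ | ⟨M₁, M₂, w, hg⟩
    · -- duplicated single edge: parallel of two single edges
      refine Or.inr (Or.inl ⟨⟨{u, v}, {s(u, v)}⟩, ⟨{u, v}, {s(u, v)}⟩, ?_, ?_, ?_, ?_, ?_⟩)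
      · exact PathLike.base u v (pathLike_ne h)
      · exact PathLike.base u v (pathLike_ne h)
      · rw [hM]; simp
      · simp
      · rw [hM] at he ⊢
        simp only [Multiset.mem_singleton] at he
        subst he
        rfl
    · rcases Multiset.mem_add.mp (by rw [← hg.edges]; exact he) with he₁ | he₂
      · refine Or.inr (Or.inl ⟨⟨M₁.verts, e ::ₘ M₁.edges⟩, M₂,
          PathLike.dup e he₁ hg.pl₁, hg.pl₂, hg.verts, hg.inter, ?_⟩)
        simp only [hg.edges, Multiset.cons_add]
      · refine Or.inr (Or.inl ⟨M₁, ⟨M₂.verts, e ::ₘ M₂.edges⟩,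
          hg.pl₁, PathLike.dup e he₂ hg.pl₂, hg.verts, hg.inter, ?_⟩)
        simp only [hg.edges, Multiset.add_cons]
    · rcases Multiset.mem_add.mp (by rw [← hg.edges]; exact he) with he₁ | he₂
      · refine Or.inr (Or.inr ⟨⟨M₁.verts, e ::ₘ M₁.edges⟩, M₂, w,
          PathLike.dup e he₁ hg.pl₁, hg.pl₂, hg.verts, hg.inter, ?_⟩)
        simp only [hg.edges, Multiset.cons_add]
      · refine Or.inr (Or.inr ⟨M₁, ⟨M₂.verts, e ::ₘ M₂.edges⟩, w,
          hg.pl₁, PathLike.dup e he₂ hg.pl₂, hg.verts, hg.inter, ?_⟩)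
        simp only [hg.edges, Multiset.add_cons]
  | @subdiv M u v x y he w hw h ih =>
    have hwu : w ≠ u := fun hwu => hw (hwu ▸ pathLike_mem_left h)
    have hwv : w ≠ v := fun hwv => hw (hwv ▸ pathLike_mem_right h)
    rcases ih with hM | ⟨M₁, M₂, hg⟩ | ⟨M₁, M₂, w', hg⟩
    · -- subdividing the single edge: series of two single edges
      have huv := pathLike_ne h
      have hxy : s(x, y) = s(u, v) := by
        rw [hM] at he; simpa using he
      rcases Sym2.eq_iff.mp hxy with ⟨rfl, rfl⟩ | ⟨rfl, rfl⟩
      · refine Or.inr (Or.inr ⟨⟨{x, w}, {s(x, w)}⟩, ⟨{w, y}, {s(w, y)}⟩, w,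
          PathLike.base x w (Ne.symm hwu), PathLike.base w y hwv, ?_, ?_, ?_⟩)
        · rw [hM]
          ext a
          simp only [Finset.mem_insert, Finset.mem_union, Finset.mem_singleton]
          tauto
        · ext a
          simp only [Finset.mem_inter, Finset.mem_insert, Finset.mem_singleton]
          constructor
          · rintro ⟨ha1 | ha1, ha2 | ha2⟩ <;> simp_all
          · rintro rfl; simp
        · rw [hM]
          show s(x, w) ::ₘ s(w, y) ::ₘ Multiset.erase {s(x, y)} s(x, y) =
            {s(x, w)} + {s(w, y)}
          have : Multiset.erase {s(x, y)} s(x, y) = 0 := by simp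
          rw [this, Multiset.singleton_add, Multiset.cons_zero]
      · -- x = v, y = u
        refine Or.inr (Or.inr ⟨⟨{y, w}, {s(y, w)}⟩, ⟨{w, x}, {s(w, x)}⟩, w,
          PathLike.base y w (Ne.symm hwu), PathLike.base w x hwv, ?_, ?_, ?_⟩)
        · rw [hM]
          ext a
          simp only [Finset.mem_insert, Finset.mem_union, Finset.mem_singleton]
          tauto
        · ext a
          simp only [Finset.mem_inter, Finset.mem_insert, Finset.mem_singleton]
          constructor
          · rintro ⟨ha1 | ha1, ha2 | ha2⟩ <;> simp_all
          · rintro rfl; simp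
        · rw [hM]
          show s(x, w) ::ₘ s(w, y) ::ₘ Multiset.erase {s(y, x)} s(x, y) =
            {s(y, w)} + {s(w, x)}
          have h1 : s(y, x) = s(x, y) := Sym2.eq_swap
          have h2 : s(x, w) = s(w, x) := Sym2.eq_swap
          have h3 : s(w, y) = s(y, w) := Sym2.eq_swap
          rw [h1, Multiset.singleton_add, h2, h3]
          have : Multiset.erase {s(x, y)} s(x, y) = 0 := by
            simp
          rw [this, Multiset.cons_swap, Multiset.cons_zero]
    · -- parallel case
      have hw₁ : w ∉ M₁.verts := fun hmem => hw (hg.verts ▸ Finset.mem_union_left _ hmem)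
      have hw₂ : w ∉ M₂.verts := fun hmem => hw (hg.verts ▸ Finset.mem_union_right _ hmem)
      rcases Multiset.mem_add.mp (by rw [← hg.edges]; exact he) with he₁ | he₂
      · refine Or.inr (Or.inl ⟨⟨insert w M₁.verts, s(x, w) ::ₘ s(w, y) ::ₘ M₁.edges.erase s(x, y)⟩,
          M₂, PathLike.subdiv x y he₁ w hw₁ hg.pl₁, hg.pl₂, ?_, ?_, ?_⟩)
        · show insert w M.verts = _
          rw [hg.verts, Finset.insert_union]
        · show insert w M₁.verts ∩ M₂.verts = _
          rw [Finset.insert_inter_of_notMem hw₂, hg.inter]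
        · show s(x, w) ::ₘ s(w, y) ::ₘ M.edges.erase s(x, y) = _
          rw [hg.edges, Multiset.erase_add_left_pos _ he₁, Multiset.cons_add, Multiset.cons_add]
      · refine Or.inr (Or.inl ⟨M₁, ⟨insert w M₂.verts, s(x, w) ::ₘ s(w, y) ::ₘ M₂.edges.erase s(x, y)⟩,
          hg.pl₁, PathLike.subdiv x y he₂ w hw₂ hg.pl₂, ?_, ?_, ?_⟩)
        · show insert w M.verts = _
          rw [hg.verts]
          ext a
          simp only [Finset.mem_insert, Finset.mem_union]
          tauto
        · show M₁.verts ∩ insert w M₂.verts = _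
          rw [Finset.inter_insert_of_notMem hw₁, hg.inter]
        · show s(x, w) ::ₘ s(w, y) ::ₘ M.edges.erase s(x, y) = _
          rw [hg.edges, Multiset.erase_add_right_pos _ he₂, Multiset.add_cons,
            Multiset.add_cons]
    · -- series case
      have hw₁ : w ∉ M₁.verts := fun hmem => hw (hg.verts ▸ Finset.mem_union_left _ hmem)
      have hw₂ : w ∉ M₂.verts := fun hmem => hw (hg.verts ▸ Finset.mem_union_right _ hmem)
      rcases Multiset.mem_add.mp (by rw [← hg.edges]; exact he) with he₁ | he₂
      · refine Or.inr (Or.inr ⟨⟨insert w M₁.verts, s(x, w) ::ₘ s(w, y) ::ₘ M₁.edges.erase s(x, y)⟩,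
          M₂, w', PathLike.subdiv x y he₁ w hw₁ hg.pl₁, hg.pl₂, ?_, ?_, ?_⟩)
        · show insert w M.verts = _
          rw [hg.verts, Finset.insert_union]
        · show insert w M₁.verts ∩ M₂.verts = _
          rw [Finset.insert_inter_of_notMem hw₂, hg.inter]
        · show s(x, w) ::ₘ s(w, y) ::ₘ M.edges.erase s(x, y) = _
          rw [hg.edges, Multiset.erase_add_left_pos _ he₁, Multiset.cons_add, Multiset.cons_add]
      · refine Or.inr (Or.inr ⟨M₁, ⟨insert w M₂.verts, s(x, w) ::ₘ s(w, y) ::ₘ M₂.edges.erase s(x, y)⟩,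
          w', hg.pl₁, PathLike.subdiv x y he₂ w hw₂ hg.pl₂, ?_, ?_, ?_⟩)
        · show insert w M.verts = _
          rw [hg.verts]
          ext a
          simp only [Finset.mem_insert, Finset.mem_union]
          tauto
        · show M₁.verts ∩ insert w M₂.verts = _
          rw [Finset.inter_insert_of_notMem hw₁, hg.inter]
        · show s(x, w) ::ₘ s(w, y) ::ₘ M.edges.erase s(x, y) = _
          rw [hg.edges, Multiset.erase_add_right_pos _ he₂, Multiset.add_cons,
            Multiset.add_cons]

end CopAux
namespace CopAux

open SimpleGraph

/-! ### The simple graph of an edge multiset, on ambient `ℕ` -/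

def SG (E : Multiset (Sym2 ℕ)) : SimpleGraph ℕ where
  Adj a b := a ≠ b ∧ s(a, b) ∈ E
  symm := ⟨by rintro a b ⟨h1, h2⟩; exact ⟨h1.symm, by rwa [Sym2.eq_swap]⟩⟩
  loopless := ⟨fun a h => h.1 rfl⟩

lemma SG_adj {E : Multiset (Sym2 ℕ)} {a b : ℕ} :
    (SG E).Adj a b ↔ a ≠ b ∧ s(a, b) ∈ E := Iff.rfl

lemma SG_le {E E' : Multiset (Sym2 ℕ)} (h : ∀ x ∈ E, x ∈ E') : SG E ≤ SG E' :=
  fun _ _ hab => ⟨hab.1, h _ hab.2⟩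

lemma step_mono {G G' : SimpleGraph ℕ} (h : G ≤ G') {a b : ℕ} :
    Step G a b → Step G' a b := by
  rintro (rfl | hab)
  · exact Or.inl rfl
  · exact Or.inr (h hab)

lemma SG_le_add_left (E₁ E₂ : Multiset (Sym2 ℕ)) : SG E₁ ≤ SG (E₁ + E₂) :=
  SG_le (fun x hx => Multiset.mem_add.mpr (Or.inl hx))

lemma SG_le_add_right (E₁ E₂ : Multiset (Sym2 ℕ)) : SG E₂ ≤ SG (E₁ + E₂) :=
  SG_le (fun x hx => Multiset.mem_add.mpr (Or.inr hx))

/-- Vertices are closed under steps, given an endpoint bound. -/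
lemma step_mem_of_endpoints {E : Multiset (Sym2 ℕ)} {S : Finset ℕ}
    (hE : ∀ a b, s(a, b) ∈ E → a ∈ S ∧ b ∈ S) {r r' : ℕ} (hr : r ∈ S)
    (h : Step (SG E) r r') : r' ∈ S := by
  rcases h with rfl | hadj
  · exact hr
  · exact (hE r r' hadj.2).2

/-! ### Reachability of path-like multigraphs -/

lemma pathLike_reach_aux : ∀ (k : ℕ) (M : Multigraph) (u v : ℕ),
    Multiset.card M.edges ≤ k → PathLike M u v →
    ∀ x ∈ M.verts, ∀ y ∈ M.verts, (SG M.edges).Reachable x y := by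
  intro k
  induction k with
  | zero =>
    intro M u v hk h
    exact absurd (pathLike_card_pos h) (by omega)
  | succ k ih =>
    intro M u v hk h x hx y hy
    rcases pathLike_decomp h with hM | ⟨M₁, M₂, hg⟩ | ⟨M₁, M₂, w, hg⟩
    · subst hM
      simp only [Finset.mem_insert, Finset.mem_singleton] at hx hy
      have huv := pathLike_ne h
      have hadj : (SG ({s(u, v)} : Multiset (Sym2 ℕ))).Adj u v := ⟨huv, by simp⟩
      rcases hx with rfl | rfl <;> rcases hy with rfl | rfl
      · rfl
      · exact hadj.reachable
      · exact hadj.symm.reachable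
      · rfl
    · have h1 : Multiset.card M₁.edges ≤ k := by
        have := pathLike_card_pos hg.pl₂
        have : Multiset.card M.edges = Multiset.card M₁.edges + Multiset.card M₂.edges := by
          rw [hg.edges]; simp
        omega
      have h2 : Multiset.card M₂.edges ≤ k := by
        have := pathLike_card_pos hg.pl₁
        have : Multiset.card M.edges = Multiset.card M₁.edges + Multiset.card M₂.edges := by
          rw [hg.edges]; simp
        omega
      have le₁ : SG M₁.edges ≤ SG M.edges := by rw [hg.edges]; exact SG_le_add_left _ _
      have le₂ : SG M₂.edges ≤ SG M.edges := by rw [hg.edges]; exact SG_le_add_right _ _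
      have hu₁ : u ∈ M₁.verts := pathLike_mem_left hg.pl₁
      have hu₂ : u ∈ M₂.verts := pathLike_mem_left hg.pl₂
      have key : ∀ z ∈ M.verts, (SG M.edges).Reachable z u := by
        intro z hz
        rw [hg.verts] at hz
        rcases Finset.mem_union.mp hz with hz | hz
        · exact ((ih M₁ u v h1 hg.pl₁ z hz u hu₁).mono le₁)
        · exact ((ih M₂ u v h2 hg.pl₂ z hz u hu₂).mono le₂)
      exact (key x hx).trans (key y hy).symm
    · have h1 : Multiset.card M₁.edges ≤ k := by
        have := pathLike_card_pos hg.pl₂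
        have : Multiset.card M.edges = Multiset.card M₁.edges + Multiset.card M₂.edges := by
          rw [hg.edges]; simp
        omega
      have h2 : Multiset.card M₂.edges ≤ k := by
        have := pathLike_card_pos hg.pl₁
        have : Multiset.card M.edges = Multiset.card M₁.edges + Multiset.card M₂.edges := by
          rw [hg.edges]; simp
        omega
      have le₁ : SG M₁.edges ≤ SG M.edges := by rw [hg.edges]; exact SG_le_add_left _ _
      have le₂ : SG M₂.edges ≤ SG M.edges := by rw [hg.edges]; exact SG_le_add_right _ _
      have hw₁ : w ∈ M₁.verts := pathLike_mem_right hg.pl₁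
      have hw₂ : w ∈ M₂.verts := pathLike_mem_left hg.pl₂
      have key : ∀ z ∈ M.verts, (SG M.edges).Reachable z w := by
        intro z hz
        rw [hg.verts] at hz
        rcases Finset.mem_union.mp hz with hz | hz
        · exact ((ih M₁ u w h1 hg.pl₁ z hz w hw₁).mono le₁)
        · exact ((ih M₂ w v h2 hg.pl₂ z hz w hw₂).mono le₂)
      exact (key x hx).trans (key y hy).symm

lemma pathLike_reach {M : Multigraph} {u v : ℕ} (h : PathLike M u v) :
    ∀ x ∈ M.verts, ∀ y ∈ M.verts, (SG M.edges).Reachable x y :=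
  pathLike_reach_aux (Multiset.card M.edges) M u v le_rfl h

/-! ### Distance utilities -/

section distutil

variable {V : Type*} {G : SimpleGraph V} {a b c : V}

lemma reach_dist_triangle (h1 : G.Reachable a b) (h2 : G.Reachable b c) :
    G.dist a c ≤ G.dist a b + G.dist b c := by
  obtain ⟨p, hp⟩ := h1.exists_walk_length_eq_dist
  obtain ⟨q, hq⟩ := h2.exists_walk_length_eq_dist
  rw [← hp, ← hq, ← SimpleGraph.Walk.length_append]
  exact SimpleGraph.dist_le _

lemma dist_adj_right (h1 : G.Reachable a b) (hadj : G.Adj b c) :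
    G.dist a c ≤ G.dist a b + 1 := by
  have := reach_dist_triangle h1 hadj.reachable
  rwa [SimpleGraph.dist_eq_one_iff_adj.mpr hadj] at this

/-- One-sided Lipschitz property of distance under a `Step`. -/
lemma dist_step_le (h1 : G.Reachable a b) (h : Step G b c) :
    G.dist a c ≤ G.dist a b + 1 := by
  rcases h with rfl | hadj
  · omega
  · exact dist_adj_right h1 hadj

end distutil

/-! ### Geodesic rails -/

section rail

variable {V : Type*} {G : SimpleGraph V} {x y : V}

lemma getVert_reach (p : G.Walk x y) (i : ℕ) : G.Reachable x (p.getVert i) := by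
  induction i with
  | zero => rw [SimpleGraph.Walk.getVert_zero]
  | succ i ihh =>
    by_cases hi : i < p.length
    · exact ihh.trans (p.adj_getVert_succ hi).reachable
    · rw [p.getVert_of_length_le (by omega), ← p.getVert_of_length_le (le_of_not_gt hi)]
      exact ihh

lemma getVert_dist_le (p : G.Walk x y) (i : ℕ) : G.dist x (p.getVert i) ≤ i := by
  induction i with
  | zero => simp [SimpleGraph.Walk.getVert_zero]
  | succ i ihh =>
    by_cases hi : i < p.length
    · exact le_trans (dist_adj_right (getVert_reach p i) (p.adj_getVert_succ hi)) (by omega)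
    · rw [p.getVert_of_length_le (by omega), ← p.getVert_of_length_le (le_of_not_gt hi)]
      omega

lemma getVert_dist_to_end (p : G.Walk x y) (i : ℕ) :
    G.dist (p.getVert i) y ≤ p.length - i := by
  by_cases hi : i ≤ p.length
  · have := getVert_dist_le p.reverse (p.length - i)
    rw [SimpleGraph.Walk.getVert_reverse] at this
    have hii : p.length - (p.length - i) = i := by omega
    rw [hii] at this
    rw [SimpleGraph.dist_comm]
    simpa using this
  · rw [p.getVert_of_length_le (by omega)]
    simp [SimpleGraph.dist_self]

lemma getVert_reach_end (p : G.Walk x y) {i : ℕ} (hi : i ≤ p.length) :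
    G.Reachable (p.getVert i) y := by
  have := getVert_reach p.reverse (p.length - i)
  rw [SimpleGraph.Walk.getVert_reverse] at this
  have hii : p.length - (p.length - i) = i := by omega
  rw [hii] at this
  exact this.symm

/-- On a geodesic, `getVert i` is at distance exactly `i` from the start. -/
lemma geodesic_getVert_dist (p : G.Walk x y) (hp : p.length = G.dist x y)
    {i : ℕ} (hi : i ≤ p.length) : G.dist x (p.getVert i) = i := by
  have h1 := getVert_dist_le p i
  have h2 := getVert_dist_to_end p i
  have h3 : G.dist x y ≤ G.dist x (p.getVert i) + G.dist (p.getVert i) y :=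
    reach_dist_triangle (getVert_reach p i) (getVert_reach_end p hi)
  omega

end rail

end CopAux
namespace CopAux

open SimpleGraph

/-- All vertices of a walk in `SG E` lie in a vertex set containing the start. -/
lemma rail_mem {E : Multiset (Sym2 ℕ)} {S : Finset ℕ}
    (hE : ∀ a b, s(a, b) ∈ E → a ∈ S ∧ b ∈ S) {x y : ℕ} (p : (SG E).Walk x y)
    (hx : x ∈ S) (i : ℕ) : p.getVert i ∈ S := by
  induction i with
  | zero => rwa [SimpleGraph.Walk.getVert_zero]
  | succ i ihh =>
    by_cases hi : i < p.length
    · have hadj := p.adj_getVert_succ hi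
      exact (hE _ _ hadj.2).2
    · rw [p.getVert_of_length_le (by omega), ← p.getVert_of_length_le (le_of_not_gt hi)]
      exact ihh

/-- Step along a rail walk: stay or move to an adjacent index. -/
lemma rail_step {V : Type*} {G : SimpleGraph V} {x y : V} (p : G.Walk x y) {s s' : ℕ}
    (hs : s ≤ p.length) (hs' : s' ≤ p.length)
    (h : s' = s ∨ s' = s + 1 ∨ s = s' + 1) :
    Step G (p.getVert s) (p.getVert s') := by
  rcases h with rfl | rfl | hss
  · exact Or.inl rfl
  · exact Or.inr (p.adj_getVert_succ (by omega))
  · subst hss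
    exact Or.inr (p.adj_getVert_succ (by omega)).symm

/-- A finite family of existentials over `ℕ` has a uniform bound. -/
lemma finset_bound {S : Finset ℕ} {P : ℕ → ℕ → Prop} (h : ∀ a ∈ S, ∃ n, P a n) :
    ∃ N, ∀ a ∈ S, ∃ n ≤ N, P a n := by
  classical
  induction S using Finset.induction with
  | empty => exact ⟨0, by simp⟩
  | @insert a S ha ih =>
    obtain ⟨N, hN⟩ := ih (fun b hb => h b (Finset.mem_insert_of_mem hb))
    obtain ⟨n, hn⟩ := h a (Finset.mem_insert_self a S)
    refine ⟨max N n, ?_⟩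
    intro b hb
    rcases Finset.mem_insert.mp hb with rfl | hb
    · exact ⟨n, le_max_right _ _, hn⟩
    · obtain ⟨m, hm, hPm⟩ := hN b hb
      exact ⟨m, le_trans hm (le_max_left _ _), hPm⟩

/-- Build an attractor step from branchwise fuels, using a finite vertex set. -/
lemma winF_intro_step {G : SimpleGraph ℕ} {X : Set ℕ} {c : Fin 2 → ℕ} {r : ℕ}
    {S : Finset ℕ} (hX : r ∉ X) (c' : Fin 2 → ℕ)
    (hv : ∀ i, Step G (c i) (c' i))
    (hS : ∀ r', Step G r r' → r' ∈ S)
    (h : ∀ r', Step G r r' → ∃ n, WinF G X n c' r') :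
    ∃ n, WinF G X n c r := by
  have h' : ∀ a ∈ S, ∃ n, (Step G r a → WinF G X n c' a) := by
    intro a _
    by_cases hstep : Step G r a
    · obtain ⟨n, hn⟩ := h a hstep
      exact ⟨n, fun _ => hn⟩
    · exact ⟨0, fun hc => absurd hc hstep⟩
  obtain ⟨N, hN⟩ := finset_bound h'
  refine ⟨N + 1, Or.inr ⟨hX, c', hv, ?_⟩⟩
  intro r' hr'
  obtain ⟨n, hn, hP⟩ := hN r' (hS r' hr')
  exact winF_mono hn (hP hr')

/-- Transport of winning across a gluing: derivations on the left part lift to the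
whole graph, provided the robber starts in the left part, the gluing boundary is
contained in the small exit set, and the big exits restricted to the left part are
small exits. -/
lemma winF_transport {E₁ E₂ : Multiset (Sym2 ℕ)} {V₁ V₂ : Finset ℕ} {X X' : Set ℕ}
    (hE₁ : ∀ a b, s(a, b) ∈ E₁ → a ∈ V₁ ∧ b ∈ V₁)
    (hE₂ : ∀ a b, s(a, b) ∈ E₂ → a ∈ V₂ ∧ b ∈ V₂)
    (hinter : ∀ a : ℕ, a ∈ V₁ → a ∈ V₂ → a ∈ X')
    (hX : ∀ a : ℕ, a ∈ X → a ∈ V₁ → a ∈ X') :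
    ∀ (n : ℕ) (c : Fin 2 → ℕ) (r : ℕ), r ∈ V₁ →
      WinF (SG E₁) X' n c r → WinF (SG (E₁ + E₂)) X n c r := by
  intro n
  induction n with
  | zero =>
    intro c r hr h
    obtain ⟨i, hi⟩ := h
    exact ⟨i, step_mono (SG_le_add_left _ _) hi⟩
  | succ n ih =>
    intro c r hr h
    rcases h with ⟨i, hi⟩ | ⟨hx', c', hc', hstep⟩
    · exact Or.inl ⟨i, step_mono (SG_le_add_left _ _) hi⟩
    · refine Or.inr ⟨fun hrx => hx' (hX r hrx hr), c',
        fun i => step_mono (SG_le_add_left _ _) (hc' i), ?_⟩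
      intro r' hr'
      rcases hr' with rfl | hadj
      · exact ih c' r hr (hstep r (Or.inl rfl))
      · rcases Multiset.mem_add.mp hadj.2 with he | he
        · exact ih c' r' (hE₁ _ _ he).2 (hstep r' (Or.inr ⟨hadj.1, he⟩))
        · exact absurd (hinter r hr (hE₂ _ _ he).1) hx'

end CopAux
namespace CopAux

/-! ### Pursuit arithmetic -/

/-- Distance between two rail indices. -/
def gap (s f : ℕ) : ℕ := max s f - min s f

/-- Move `s` one step towards `f`. -/
def clamp (s f : ℕ) : ℕ := if s < f then s + 1 else if f < s then s - 1 else s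

/-- Catch-up potential of a cop at rail index `s` chasing target `f` on a rail of
length `L`. -/
def Psi (L s f : ℕ) : ℕ :=
  if gap s f ≤ 1 then 0 else gap s f * (L + 1) + (if s ≤ f then L - f else f)

lemma clamp_le {s f L : ℕ} (hs : s ≤ L) (hf : f ≤ L) : clamp s f ≤ L := by
  unfold clamp; split_ifs <;> omega

lemma clamp_near (s f : ℕ) :
    clamp s f = s ∨ clamp s f = s + 1 ∨ s = clamp s f + 1 := by
  unfold clamp; split_ifs <;> omega

lemma psi_sync {s f f' : ℕ} (hg : gap s f ≤ 1) :
    clamp s f = f ∧ (f ≤ f' + 1 → f' ≤ f + 1 → gap (clamp s f) f' ≤ 1) := by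
  unfold gap at *
  unfold clamp
  constructor
  · split_ifs <;> omega
  · intro h1 h2
    split_ifs <;> omega

lemma psi_of_sync {L s f : ℕ} (hg : gap s f ≤ 1) : Psi L s f = 0 := by
  unfold Psi
  rw [if_pos hg]

private lemma helper_lt {g g' h h' L : ℕ} (hgg : g' < g) (hh' : h' ≤ L) :
    g' * (L + 1) + h' < g * (L + 1) + h := by
  have h1 : g' * (L + 1) + h' < g' * (L + 1) + (L + 1) := by omega
  have h2 : g' * (L + 1) + (L + 1) = (g' + 1) * (L + 1) := by ring
  have h3 : (g' + 1) * (L + 1) ≤ g * (L + 1) := Nat.mul_le_mul_right _ (by omega)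
  omega

private lemma helper_pos {g L h : ℕ} (hg : 2 ≤ g) : 0 < g * (L + 1) + h := by
  have : 0 < g * (L + 1) := Nat.mul_pos (by omega) (by omega)
  omega

lemma psi_eval {L s f : ℕ} (hg : 2 ≤ gap s f) :
    Psi L s f = gap s f * (L + 1) + (if s ≤ f then L - f else f) := by
  unfold Psi
  rw [if_neg (by omega)]

/-- Key decrease property of the pursuit potential. -/
lemma psi_dec {L s f f' : ℕ} (hs : s ≤ L) (hf : f ≤ L) (hf' : f' ≤ L)
    (h1 : f ≤ f' + 1) (h2 : f' ≤ f + 1) (hg : 2 ≤ gap s f) :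
    Psi L (clamp s f) f' < Psi L s f := by
  rcases lt_trichotomy s f with hsf | hsf | hsf
  · -- s < f, gap = f - s, clamp = s + 1, h = L - f
    have hgap : gap s f = f - s := by unfold gap; omega
    have hclamp : clamp s f = s + 1 := by unfold clamp; rw [if_pos hsf]
    have hPsi : Psi L s f = (f - s) * (L + 1) + (L - f) := by
      rw [psi_eval hg, hgap, if_pos (by omega)]
    rcases (by omega : f' = f + 1 ∨ f' = f ∨ f' + 1 = f) with hf2 | hf2 | hf2
    · -- target ran away: same gap, second component decreases
      have hgap' : gap (s + 1) f' = f - s := by unfold gap; omega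
      have hPsi' : Psi L (s + 1) f' = (f - s) * (L + 1) + (L - f') := by
        rw [psi_eval (by rw [hgap']; omega), hgap', if_pos (by omega)]
      rw [hclamp, hPsi', hPsi]
      have : L - f' < L - f := by omega
      omega
    · -- gap decreased by one
      have hgap' : gap (s + 1) f' = f - s - 1 := by unfold gap; omega
      rw [hclamp, hPsi]
      by_cases hsmall : gap (s + 1) f' ≤ 1
      · rw [psi_of_sync hsmall]
        exact helper_pos (by omega)
      · rw [psi_eval (by omega), hgap']
        apply helper_lt (by omega)
        split_ifs <;> omega
    · -- gap decreased by two
      have hgap' : gap (s + 1) f' = f - s - 2 := by unfold gap; omega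
      rw [hclamp, hPsi]
      by_cases hsmall : gap (s + 1) f' ≤ 1
      · rw [psi_of_sync hsmall]
        exact helper_pos (by omega)
      · rw [psi_eval (by omega), hgap']
        apply helper_lt (by omega)
        split_ifs <;> omega
  · unfold gap at hg; omega
  · -- f < s, gap = s - f, clamp = s - 1, h = f
    have hgap : gap s f = s - f := by unfold gap; omega
    have hclamp : clamp s f = s - 1 := by
      unfold clamp; rw [if_neg (by omega), if_pos hsf]
    have hPsi : Psi L s f = (s - f) * (L + 1) + f := by
      rw [psi_eval hg, hgap, if_neg (by omega)]
    rcases (by omega : f' = f + 1 ∨ f' = f ∨ f' + 1 = f) with hf2 | hf2 | hf2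
    · -- gap decreased by two
      have hgap' : gap (s - 1) f' = s - f - 2 := by unfold gap; omega
      rw [hclamp, hPsi]
      by_cases hsmall : gap (s - 1) f' ≤ 1
      · rw [psi_of_sync hsmall]
        exact helper_pos (by omega)
      · rw [psi_eval (by omega), hgap']
        apply helper_lt (by omega)
        split_ifs <;> omega
    · -- gap decreased by one
      have hgap' : gap (s - 1) f' = s - f - 1 := by unfold gap; omega
      rw [hclamp, hPsi]
      by_cases hsmall : gap (s - 1) f' ≤ 1
      · rw [psi_of_sync hsmall]
        exact helper_pos (by omega)
      · rw [psi_eval (by omega), hgap']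
        apply helper_lt (by omega)
        split_ifs <;> omega
    · -- target ran away (towards 0): same gap, second component decreases
      have hgap' : gap (s - 1) f' = s - f := by unfold gap; omega
      have hPsi' : Psi L (s - 1) f' = (s - f) * (L + 1) + f' := by
        rw [psi_eval (by rw [hgap']; omega), hgap', if_neg (by omega)]
      rw [hclamp, hPsi', hPsi]
      omega

/-- Chase target on a rail of length `L` against a robber at effective distance `D`. -/
def fT (L D : ℕ) : ℕ := min L (D - 1)

lemma fT_le (L D : ℕ) : fT L D ≤ L := min_le_left _ _

lemma fT_lip {L D D' : ℕ} (h1 : D ≤ D' + 1) (h2 : D' ≤ D + 1) :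
    fT L D ≤ fT L D' + 1 ∧ fT L D' ≤ fT L D + 1 := by
  unfold fT; omega

lemma psi_pos {L s f : ℕ} (hg : 2 ≤ gap s f) : 0 < Psi L s f := by
  rw [psi_eval hg]
  have : 0 < gap s f * (L + 1) := Nat.mul_pos (by omega) (by omega)
  omega

lemma clampJ (L s D : ℕ) (h : s ≤ D + 1) : clamp s (fT L D) ≤ D := by
  unfold clamp fT
  split_ifs <;> omega

lemma psi_le {L s f f' : ℕ} (hs : s ≤ L) (hf : f ≤ L) (hf' : f' ≤ L)
    (h1 : f ≤ f' + 1) (h2 : f' ≤ f + 1) :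
    Psi L (clamp s f) f' ≤ Psi L s f := by
  by_cases hg : gap s f ≤ 1
  · rw [psi_of_sync (((psi_sync hg).2 h1 h2))]; omega
  · exact le_of_lt (psi_dec hs hf hf' h1 h2 (by omega))

end CopAux
namespace CopAux

open SimpleGraph

/-- The robber's effective distance to the home exit `h0` across the series gluing. -/
noncomputable def DD (Eh Eo : Multiset (Sym2 ℕ)) (Vh : Finset ℕ) (h0 wm r : ℕ) : ℕ :=
  if r ∈ Vh then (SG Eh).dist h0 r else (SG Eh).dist h0 wm + (SG Eo).dist wm r

lemma step_symm {V : Type*} {G : SimpleGraph V} {a b : V} (h : Step G a b) : Step G b a := by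
  rcases h with rfl | h
  · exact Or.inl rfl
  · exact Or.inr h.symm

/-- All data of a series decomposition, from the point of view of one side
("h" = the robber-side home data, "o" = the other side). -/
structure SerPack where
  Eh : Multiset (Sym2 ℕ)
  Eo : Multiset (Sym2 ℕ)
  Vh : Finset ℕ
  Vo : Finset ℕ
  h0 : ℕ
  o0 : ℕ
  wm : ℕ
  G : SimpleGraph ℕ
  X : Set ℕ
  hEh : ∀ a b, s(a, b) ∈ Eh → a ∈ Vh ∧ b ∈ Vh
  hEo : ∀ a b, s(a, b) ∈ Eo → a ∈ Vo ∧ b ∈ Vo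
  hinter : ∀ a, a ∈ Vh → a ∈ Vo → a = wm
  hh0 : h0 ∈ Vh
  hwh : wm ∈ Vh
  hwo : wm ∈ Vo
  ho0 : o0 ∈ Vo
  hh0w : h0 ≠ wm
  ho0w : o0 ≠ wm
  reachh : ∀ x ∈ Vh, ∀ y ∈ Vh, (SG Eh).Reachable x y
  reacho : ∀ x ∈ Vo, ∀ y ∈ Vo, (SG Eo).Reachable x y
  hGadj : ∀ a b, G.Adj a b ↔ ((SG Eh).Adj a b ∨ (SG Eo).Adj a b)
  hXmem : ∀ a, a ∈ X ↔ (a = h0 ∨ a = o0)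
  ph : (SG Eh).Walk h0 wm
  hph : ph.length = (SG Eh).dist h0 wm
  po : (SG Eo).Walk o0 wm
  hpo : po.length = (SG Eo).dist o0 wm
  IHh : ∀ c : Fin 2 → ℕ, (∀ i, c i = h0 ∨ c i = wm) → (∃ i, c i = h0) →
      (∃ i, c i = wm) → ∀ r ∈ Vh, ∃ n, WinF G X n c r
  IHo : ∀ c : Fin 2 → ℕ, (∀ i, c i = o0 ∨ c i = wm) → (∃ i, c i = o0) →
      (∃ i, c i = wm) → ∀ r ∈ Vo, ∃ n, WinF G X n c r

/-- Swap the two sides of a series pack. -/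
def SerPack.swap (P : SerPack) : SerPack where
  Eh := P.Eo
  Eo := P.Eh
  Vh := P.Vo
  Vo := P.Vh
  h0 := P.o0
  o0 := P.h0
  wm := P.wm
  G := P.G
  X := P.X
  hEh := P.hEo
  hEo := P.hEh
  hinter := fun a x y => P.hinter a y x
  hh0 := P.ho0
  hwh := P.hwo
  hwo := P.hwh
  ho0 := P.hh0
  hh0w := P.ho0w
  ho0w := P.hh0w
  reachh := P.reacho
  reacho := P.reachh
  hGadj := fun a b => (P.hGadj a b).trans or_comm
  hXmem := fun a => (P.hXmem a).trans or_comm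
  ph := P.po
  hph := P.hpo
  po := P.ph
  hpo := P.hph
  IHh := P.IHo
  IHo := P.IHh

namespace SerPack

variable (P : SerPack)

/-- Effective distance of the robber to the home exit. -/
noncomputable def Dh (r : ℕ) : ℕ := DD P.Eh P.Eo P.Vh P.h0 P.wm r

lemma swap_Dh (r : ℕ) : P.swap.Dh r = DD P.Eo P.Eh P.Vo P.o0 P.wm r := rfl

lemma hGh : SG P.Eh ≤ P.G := fun a b h => (P.hGadj a b).mpr (Or.inl h)

lemma hGo : SG P.Eo ≤ P.G := fun a b h => (P.hGadj a b).mpr (Or.inr h)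

lemma Lh_pos : 0 < P.ph.length := by
  rw [P.hph]
  exact (P.reachh _ P.hh0 _ P.hwh).pos_dist_of_ne P.hh0w

lemma Dh_mem {r : ℕ} (hr : r ∈ P.Vh) : P.Dh r = (SG P.Eh).dist P.h0 r := if_pos hr

lemma Dh_h0 : P.Dh P.h0 = 0 := by
  rw [P.Dh_mem P.hh0, SimpleGraph.dist_self]

lemma Dh_wm : P.Dh P.wm = P.ph.length := by
  rw [P.Dh_mem P.hwh, P.hph]

lemma not_mem_Vh {r : ℕ} (hr : r ∈ P.Vo) (hrw : r ≠ P.wm) : r ∉ P.Vh :=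
  fun h => hrw (P.hinter r h hr)

lemma Dh_other {r : ℕ} (hr : r ∈ P.Vo) (hrw : r ≠ P.wm) :
    P.Dh r = P.ph.length + (SG P.Eo).dist P.wm r ∧ P.ph.length + 1 ≤ P.Dh r := by
  have h1 : P.Dh r = (SG P.Eh).dist P.h0 P.wm + (SG P.Eo).dist P.wm r :=
    if_neg (P.not_mem_Vh hr hrw)
  have h2 : 0 < (SG P.Eo).dist P.wm r :=
    (P.reacho _ P.hwo _ hr).pos_dist_of_ne (Ne.symm hrw)
  rw [← P.hph] at h1
  exact ⟨h1, by omega⟩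

lemma Dh_pos {r : ℕ} (hr : r ∈ P.Vh ∪ P.Vo) (hrne : r ≠ P.h0) : 0 < P.Dh r := by
  rcases Finset.mem_union.mp hr with h | h
  · rw [P.Dh_mem h]
    exact ((P.reachh _ P.hh0 _ h).pos_dist_of_ne (Ne.symm hrne))
  · by_cases hrw : r = P.wm
    · subst hrw; rw [P.Dh_wm]; exact P.Lh_pos
    · have := (P.Dh_other h hrw).2
      omega

/-- Robber moves stay in the two parts. -/
lemma step_closure {r r' : ℕ} (hr : r ∈ P.Vh ∪ P.Vo) (h : Step P.G r r') :
    r' ∈ P.Vh ∪ P.Vo := by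
  rcases h with rfl | hadj
  · exact hr
  · rcases (P.hGadj _ _).mp hadj with h | h
    · exact Finset.mem_union_left _ (P.hEh _ _ h.2).2
    · exact Finset.mem_union_right _ (P.hEo _ _ h.2).2

/-- A step from a vertex strictly inside the home part stays in the home part. -/
lemma step_Vh {r r' : ℕ} (hr : r ∈ P.Vh) (hrw : r ≠ P.wm) (h : Step P.G r r') :
    r' ∈ P.Vh := by
  rcases h with rfl | hadj
  · exact hr
  · rcases (P.hGadj _ _).mp hadj with h | h
    · exact (P.hEh _ _ h.2).2
    · exact absurd (P.hinter r hr (P.hEo _ _ h.2).1) hrw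

/-- A step between two vertices of the home part, not both `wm`, is a home step. -/
lemma step_Eh {r r' : ℕ} (hr : r ∈ P.Vh) (hrw : r ≠ P.wm) (h : Step P.G r r') :
    Step (SG P.Eh) r r' := by
  rcases h with rfl | hadj
  · exact Or.inl rfl
  · rcases (P.hGadj _ _).mp hadj with h | h
    · exact Or.inr h
    · exact absurd (P.hinter r hr (P.hEo _ _ h.2).1) hrw

/-- Lipschitz property of the effective distance. -/
lemma Dh_lip {r r' : ℕ} (hr : r ∈ P.Vh ∪ P.Vo) (h : Step P.G r r') :
    P.Dh r' ≤ P.Dh r + 1 := by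
  rcases h with rfl | hadj
  · omega
  · rcases (P.hGadj _ _).mp hadj with he | he
    · have h1 := (P.hEh _ _ he.2).1
      have h2 := (P.hEh _ _ he.2).2
      rw [P.Dh_mem h1, P.Dh_mem h2]
      exact dist_adj_right (P.reachh _ P.hh0 _ h1) he
    · have h1 := (P.hEo _ _ he.2).1
      have h2 := (P.hEo _ _ he.2).2
      by_cases hrw : r = P.wm
      · subst hrw
        have hr'w : r' ≠ P.wm := Ne.symm he.1
        rw [P.Dh_wm, ((P.Dh_other h2 hr'w).1)]
        have : (SG P.Eo).dist P.wm r' = 1 := SimpleGraph.dist_eq_one_iff_adj.mpr he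
        omega
      · by_cases hr'w : r' = P.wm
        · subst hr'w
          rw [P.Dh_wm, ((P.Dh_other h1 hrw).1)]
          omega
        · rw [(P.Dh_other h1 hrw).1, (P.Dh_other h2 hr'w).1]
          have := dist_adj_right (P.reacho _ P.hwo _ h1) he
          omega

/-- Two-sided Lipschitz property. -/
lemma Dh_lip' {r r' : ℕ} (hr : r ∈ P.Vh ∪ P.Vo) (h : Step P.G r r') :
    P.Dh r' ≤ P.Dh r + 1 ∧ P.Dh r ≤ P.Dh r' + 1 :=
  ⟨P.Dh_lip hr h, P.Dh_lip (P.step_closure hr h) (step_symm h)⟩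

/-- A cop within rail distance 1 of home can capture a robber standing on home. -/
lemma cap_near {sA : ℕ} (hs : sA ≤ 1) : Step P.G (P.ph.getVert sA) P.h0 := by
  rcases Nat.le_one_iff_eq_zero_or_eq_one.mp hs with rfl | rfl
  · rw [SimpleGraph.Walk.getVert_zero]
    exact Or.inl rfl
  · have hadj := P.ph.adj_getVert_succ (i := 0) P.Lh_pos
    rw [SimpleGraph.Walk.getVert_zero] at hadj
    exact Or.inr (P.hGh hadj.symm)

end SerPack

end CopAux
namespace CopAux

open SimpleGraph

lemma fin2_cases : ∀ (iA iB j : Fin 2), iA ≠ iB → j = iA ∨ j = iB := by decide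

namespace SerPack

/-- If no capture is available, the robber is not standing on the home exit. -/
lemma no_cap_ne_h0 (P : SerPack) {c : Fin 2 → ℕ} {r : ℕ} {iA : Fin 2} {sA : ℕ}
    (hcA : c iA = P.ph.getVert sA) (hJ : sA ≤ P.Dh r + 1)
    (hcap : ¬ ∃ i, Step P.G (c i) r) : r ≠ P.h0 := by
  rintro rfl
  rw [P.Dh_h0] at hJ
  exact hcap ⟨iA, by rw [hcA]; exact P.cap_near hJ⟩

lemma mem_Vh_ne_o0 (P : SerPack) {r : ℕ} (hr : r ∈ P.Vh) : r ≠ P.o0 :=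
  fun hh => P.ho0w (P.hinter P.o0 (hh ▸ hr) P.ho0)

/-- Rail-step in the ambient graph. -/
lemma rail_stepG (P : SerPack) {s s' : ℕ} (hs : s ≤ P.ph.length) (hs' : s' ≤ P.ph.length)
    (h : s' = s ∨ s' = s + 1 ∨ s = s' + 1) :
    Step P.G (P.ph.getVert s) (P.ph.getVert s') := by
  rcases h with rfl | rfl | hss
  · exact Or.inl rfl
  · exact Or.inr (P.hGh (P.ph.adj_getVert_succ (by omega)))
  · subst hss
    exact Or.inr (P.hGh (P.ph.adj_getVert_succ (by omega)).symm)

/-- Phase 3: one cop sits on the midpoint, the other retreats home, then the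
sub-strategy for the home part takes over. -/
lemma gohome (P : SerPack) : ∀ (sA : ℕ) (c : Fin 2 → ℕ) (r : ℕ) (iA iB : Fin 2),
    iA ≠ iB → c iB = P.wm → c iA = P.ph.getVert sA → sA ≤ P.ph.length →
    sA ≤ (SG P.Eh).dist P.h0 r + 1 → r ∈ P.Vh → ∃ n, WinF P.G P.X n c r := by
  intro sA
  induction sA with
  | zero =>
    intro c r iA iB hne hcB hcA hsA hJ hrV
    have hcA0 : c iA = P.h0 := by rw [hcA, SimpleGraph.Walk.getVert_zero]
    refine P.IHh c ?_ ⟨iA, hcA0⟩ ⟨iB, hcB⟩ r hrV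
    intro j
    rcases fin2_cases iA iB j hne with rfl | rfl
    · exact Or.inl hcA0
    · exact Or.inr hcB
  | succ k ih =>
    intro c r iA iB hne hcB hcA hsA hJ hrV
    by_cases hcap : ∃ i, Step P.G (c i) r
    · exact ⟨0, hcap⟩
    have hJ' : k + 1 ≤ P.Dh r + 1 := by rwa [P.Dh_mem hrV]
    have hrh0 : r ≠ P.h0 := P.no_cap_ne_h0 hcA hJ' hcap
    have hro0 : r ≠ P.o0 := P.mem_Vh_ne_o0 hrV
    have hrw : r ≠ P.wm := fun h => hcap ⟨iB, Or.inl (by rw [hcB, h])⟩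
    have hrX : r ∉ P.X := fun hx => by
      rcases (P.hXmem r).mp hx with h | h
      exacts [hrh0 h, hro0 h]
    set c' : Fin 2 → ℕ := fun j => if j = iA then P.ph.getVert k else c j with hc'
    have hvalid : ∀ j, Step P.G (c j) (c' j) := by
      intro j
      by_cases hj : j = iA
      · subst hj
        rw [hc']
        simp only [if_pos rfl]
        rw [hcA]
        exact P.rail_stepG hsA (by omega) (by omega)
      · rw [hc']
        simp only [if_neg hj]
        exact Or.inl rfl
    refine winF_intro_step hrX c' hvalid (S := P.Vh)
      (fun r' h => P.step_Vh hrV hrw h) ?_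
    intro r' hr'
    have hr'V : r' ∈ P.Vh := P.step_Vh hrV hrw hr'
    have hdd : (SG P.Eh).dist P.h0 r ≤ (SG P.Eh).dist P.h0 r' + 1 :=
      dist_step_le (P.reachh _ P.hh0 _ hr'V) (step_symm (P.step_Eh hrV hrw hr'))
    refine ih c' r' iA iB hne ?_ ?_ (by omega) (by omega) hr'V
    · rw [hc']; simp only [if_neg (Ne.symm hne)]; exact hcB
    · simp [hc']

/-- Phase 2: the robber is strictly inside the home part, the far cop is within one
step of the midpoint: seal the midpoint and send the near cop home. -/
lemma side (P : SerPack) (c : Fin 2 → ℕ) (r : ℕ) (iA iB : Fin 2) (sA sB : ℕ)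
    (hne : iA ≠ iB) (hcA : c iA = P.ph.getVert sA) (hsA : sA ≤ P.ph.length)
    (hJA : sA ≤ (SG P.Eh).dist P.h0 r + 1)
    (hcB : c iB = P.po.getVert sB) (hsB : sB ≤ P.po.length)
    (hsB' : P.po.length ≤ sB + 1)
    (hrV : r ∈ P.Vh) (hrw : r ≠ P.wm) : ∃ n, WinF P.G P.X n c r := by
  by_cases hcap : ∃ i, Step P.G (c i) r
  · exact ⟨0, hcap⟩
  have hJA' : sA ≤ P.Dh r + 1 := by rwa [P.Dh_mem hrV]
  have hrh0 : r ≠ P.h0 := P.no_cap_ne_h0 hcA hJA' hcap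
  have hro0 : r ≠ P.o0 := P.mem_Vh_ne_o0 hrV
  have hrX : r ∉ P.X := fun hx => by
    rcases (P.hXmem r).mp hx with h | h
    exacts [hrh0 h, hro0 h]
  set d := (SG P.Eh).dist P.h0 r with hd
  set sA' := min sA d with hsA'
  set c' : Fin 2 → ℕ := fun j => if j = iA then P.ph.getVert sA' else P.po.getVert P.po.length
    with hc'
  have hvalid : ∀ j, Step P.G (c j) (c' j) := by
    intro j
    rcases fin2_cases iA iB j hne with rfl | rfl
    · rw [hc']
      simp only [if_pos rfl]
      rw [hcA]
      exact P.rail_stepG hsA (by omega) (by omega)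
    · rw [hc']
      simp only [if_neg (Ne.symm hne)]
      rw [hcB]
      refine step_mono P.hGo (rail_step P.po hsB le_rfl (by omega))
  refine winF_intro_step hrX c' hvalid (S := P.Vh)
    (fun r' h => P.step_Vh hrV hrw h) ?_
  intro r' hr'
  have hr'V : r' ∈ P.Vh := P.step_Vh hrV hrw hr'
  have hdd : d ≤ (SG P.Eh).dist P.h0 r' + 1 :=
    dist_step_le (P.reachh _ P.hh0 _ hr'V) (step_symm (P.step_Eh hrV hrw hr'))
  refine P.gohome sA' c' r' iA iB hne ?_ ?_ (by omega) (by omega) hr'V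
  · rw [hc']
    simp only [if_neg (Ne.symm hne)]
    exact SimpleGraph.Walk.getVert_length P.po
  · simp [hc']

end SerPack

end CopAux
namespace CopAux

open SimpleGraph

namespace SerPack

/-- The midpoint case: both cops are synced and the robber stands on the midpoint. -/
lemma wcase (P : SerPack) (c : Fin 2 → ℕ) (iA iB : Fin 2) (sA sB : ℕ)
    (hne : iA ≠ iB) (hcA : c iA = P.ph.getVert sA) (hsA : sA ≤ P.ph.length)
    (hcB : c iB = P.po.getVert sB) (hsB : sB ≤ P.po.length)
    (hsA2 : P.ph.length ≤ sA + 2) (hsB2 : P.po.length ≤ sB + 2) :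
    ∃ n, WinF P.G P.X n c P.wm := by
  by_cases hcap : ∃ i, Step P.G (c i) P.wm
  · exact ⟨0, hcap⟩
  have hLh : 0 < P.ph.length := P.Lh_pos
  have hLo : 0 < P.po.length := P.swap.Lh_pos
  have hwX : P.wm ∉ P.X := fun hx => by
    rcases (P.hXmem _).mp hx with h | h
    exacts [P.hh0w h.symm, P.ho0w h.symm]
  set c' : Fin 2 → ℕ := fun j => if j = iA then P.ph.getVert (P.ph.length - 1)
    else P.po.getVert (P.po.length - 1) with hc'
  have hvalid : ∀ j, Step P.G (c j) (c' j) := by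
    intro j
    rcases fin2_cases iA iB j hne with rfl | rfl
    · rw [hc']; simp only [if_pos rfl]; rw [hcA]
      exact P.rail_stepG hsA (by omega) (by omega)
    · rw [hc']; simp only [if_neg (Ne.symm hne)]; rw [hcB]
      exact step_mono P.hGo (rail_step P.po hsB (by omega) (by omega))
  have hwv : P.wm ∈ P.Vh ∪ P.Vo := Finset.mem_union_left _ P.hwh
  refine winF_intro_step hwX c' hvalid (S := P.Vh ∪ P.Vo)
    (fun r' h => P.step_closure hwv h) ?_
  intro r' hr'
  by_cases hr'w : r' = P.wm
  · subst hr'w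
    refine ⟨0, iA, Or.inr ?_⟩
    have hadj := P.ph.adj_getVert_succ (i := P.ph.length - 1) (by omega)
    have heq : P.ph.length - 1 + 1 = P.ph.length := by omega
    rw [heq, SimpleGraph.Walk.getVert_length] at hadj
    have : c' iA = P.ph.getVert (P.ph.length - 1) := by simp [hc']
    rw [this]
    exact P.hGh hadj
  · rcases Finset.mem_union.mp (P.step_closure hwv hr') with hVh | hVo
    · have hstep : Step (SG P.Eh) r' P.wm := P.step_Eh hVh hr'w (step_symm hr')
      have hdd : (SG P.Eh).dist P.h0 P.wm ≤ (SG P.Eh).dist P.h0 r' + 1 :=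
        dist_step_le (P.reachh _ P.hh0 _ hVh) hstep
      rw [← P.hph] at hdd
      refine P.side c' r' iA iB (P.ph.length - 1) (P.po.length - 1) hne
        (by simp [hc']) (by omega) (by omega)
        (by rw [hc']; simp only [if_neg (Ne.symm hne)]) (by omega) (by omega) hVh hr'w
    · have hstep : Step (SG P.Eo) r' P.wm := P.swap.step_Eh hVo hr'w (step_symm hr')
      have hdd : (SG P.Eo).dist P.o0 P.wm ≤ (SG P.Eo).dist P.o0 r' + 1 :=
        dist_step_le (P.reacho _ P.ho0 _ hVo) hstep
      rw [← P.hpo] at hdd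
      refine P.swap.side c' r' iB iA (P.po.length - 1) (P.ph.length - 1) (Ne.symm hne)
        (by rw [hc']; simp only [if_neg (Ne.symm hne)]; rfl)
        (by show P.po.length - 1 ≤ P.po.length; omega)
        (by show P.po.length - 1 ≤ (SG P.Eo).dist P.o0 r' + 1; omega)
        (by simp [hc']; rfl)
        (by show P.ph.length - 1 ≤ P.ph.length; omega)
        (by show P.ph.length ≤ P.ph.length - 1 + 1; omega) hVo hr'w

/-- Both cops synced: one round of analysis resolves into a milestone. -/
lemma dispatch (P : SerPack) (c : Fin 2 → ℕ) (r : ℕ) (iA iB : Fin 2) (sA sB : ℕ)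
    (hne : iA ≠ iB) (hcA : c iA = P.ph.getVert sA) (hsA : sA ≤ P.ph.length)
    (hcB : c iB = P.po.getVert sB) (hsB : sB ≤ P.po.length)
    (hJA : sA ≤ P.Dh r + 1) (hJB : sB ≤ P.swap.Dh r + 1)
    (hgA : gap sA (fT P.ph.length (P.Dh r)) ≤ 1)
    (hgB : gap sB (fT P.po.length (P.swap.Dh r)) ≤ 1)
    (hrV : r ∈ P.Vh ∪ P.Vo) : ∃ n, WinF P.G P.X n c r := by
  by_cases hcap : ∃ i, Step P.G (c i) r
  · exact ⟨0, hcap⟩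
  have hLh : 0 < P.ph.length := P.Lh_pos
  have hLo : 0 < P.po.length := P.swap.Lh_pos
  by_cases hrw : r = P.wm
  · subst hrw
    have h1 : P.Dh P.wm = P.ph.length := P.Dh_wm
    have h2 : P.swap.Dh P.wm = P.po.length := P.swap.Dh_wm
    rw [h1] at hgA
    rw [h2] at hgB
    refine P.wcase c iA iB sA sB hne hcA hsA hcB hsB ?_ ?_
    · unfold gap fT at hgA; omega
    · unfold gap fT at hgB; omega
  · rcases Finset.mem_union.mp hrV with hVh | hVo
    · have hD : P.po.length + 1 ≤ P.swap.Dh r := (P.swap.Dh_other hVh hrw).2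
      refine P.side c r iA iB sA sB hne hcA hsA
        (by rw [← P.Dh_mem hVh]; exact hJA) hcB hsB ?_ hVh hrw
      have hfB : fT P.po.length (P.swap.Dh r) = P.po.length := by
        unfold fT; omega
      rw [hfB] at hgB
      unfold gap at hgB; omega
    · have hD : P.ph.length + 1 ≤ P.Dh r := (P.Dh_other hVo hrw).2
      refine P.swap.side c r iB iA sB sA (Ne.symm hne) hcB hsB
        (by rw [← P.swap.Dh_mem hVo]; exact hJB) hcA hsA ?_ hVo hrw
      show P.ph.length ≤ sA + 1
      have hfA : fT P.ph.length (P.Dh r) = P.ph.length := by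
        unfold fT; omega
      rw [hfA] at hgA
      unfold gap at hgA; omega

/-- Phase 1: both cops catch up with their shadow targets and the game resolves. -/
lemma catchup (P : SerPack) : ∀ (μ : ℕ) (c : Fin 2 → ℕ) (r : ℕ) (iA iB : Fin 2) (sA sB : ℕ),
    iA ≠ iB → c iA = P.ph.getVert sA → sA ≤ P.ph.length →
    c iB = P.po.getVert sB → sB ≤ P.po.length →
    sA ≤ P.Dh r + 1 → sB ≤ P.swap.Dh r + 1 → r ∈ P.Vh ∪ P.Vo →
    Psi P.ph.length sA (fT P.ph.length (P.Dh r)) +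
      Psi P.po.length sB (fT P.po.length (P.swap.Dh r)) ≤ μ →
    ∃ n, WinF P.G P.X n c r := by
  intro μ
  induction μ with
  | zero =>
    intro c r iA iB sA sB hne hcA hsA hcB hsB hJA hJB hrV hμ
    refine P.dispatch c r iA iB sA sB hne hcA hsA hcB hsB hJA hJB ?_ ?_ hrV
    · by_contra h
      have := psi_pos (L := P.ph.length) (s := sA) (f := fT P.ph.length (P.Dh r)) (by omega)
      omega
    · by_contra h
      have := psi_pos (L := P.po.length) (s := sB) (f := fT P.po.length (P.swap.Dh r)) (by omega)
      omega
  | succ k ih =>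
    intro c r iA iB sA sB hne hcA hsA hcB hsB hJA hJB hrV hμ
    by_cases hsync : gap sA (fT P.ph.length (P.Dh r)) ≤ 1 ∧
        gap sB (fT P.po.length (P.swap.Dh r)) ≤ 1
    · exact P.dispatch c r iA iB sA sB hne hcA hsA hcB hsB hJA hJB hsync.1 hsync.2 hrV
    by_cases hcap : ∃ i, Step P.G (c i) r
    · exact ⟨0, hcap⟩
    have hrh0 : r ≠ P.h0 := P.no_cap_ne_h0 hcA hJA hcap
    have hro0 : r ≠ P.o0 := P.swap.no_cap_ne_h0 (sA := sB) hcB hJB hcap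
    have hrX : r ∉ P.X := fun hx => by
      rcases (P.hXmem r).mp hx with h | h
      exacts [hrh0 h, hro0 h]
    have hsA'le : clamp sA (fT P.ph.length (P.Dh r)) ≤ P.ph.length :=
      clamp_le hsA (fT_le _ _)
    have hsB'le : clamp sB (fT P.po.length (P.swap.Dh r)) ≤ P.po.length :=
      clamp_le hsB (fT_le _ _)
    set c' : Fin 2 → ℕ := fun j => if j = iA then
        P.ph.getVert (clamp sA (fT P.ph.length (P.Dh r)))
      else P.po.getVert (clamp sB (fT P.po.length (P.swap.Dh r))) with hc'
    have hvalid : ∀ j, Step P.G (c j) (c' j) := by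
      intro j
      rcases fin2_cases iA iB j hne with rfl | rfl
      · rw [hc']; simp only [if_pos rfl]; rw [hcA]
        exact P.rail_stepG hsA hsA'le (clamp_near sA _)
      · rw [hc']; simp only [if_neg (Ne.symm hne)]; rw [hcB]
        exact step_mono P.hGo (rail_step P.po hsB hsB'le (clamp_near sB _))
    refine winF_intro_step hrX c' hvalid (S := P.Vh ∪ P.Vo)
      (fun r' h => P.step_closure hrV h) ?_
    intro r' hr'
    have hr'V : r' ∈ P.Vh ∪ P.Vo := P.step_closure hrV hr'
    have hrV2 : r ∈ P.Vo ∪ P.Vh := by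
      rcases Finset.mem_union.mp hrV with h | h
      exacts [Finset.mem_union_right _ h, Finset.mem_union_left _ h]
    have hlipA : P.Dh r' ≤ P.Dh r + 1 ∧ P.Dh r ≤ P.Dh r' + 1 := P.Dh_lip' hrV hr'
    have hlipB : P.swap.Dh r' ≤ P.swap.Dh r + 1 ∧ P.swap.Dh r ≤ P.swap.Dh r' + 1 :=
      P.swap.Dh_lip' hrV2 hr'
    have hftA := fT_lip (L := P.ph.length) hlipA.2 hlipA.1
    have hftB := fT_lip (L := P.po.length) hlipB.2 hlipB.1
    have hJA2 : clamp sA (fT P.ph.length (P.Dh r)) ≤ P.Dh r :=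
      clampJ P.ph.length sA (P.Dh r) hJA
    have hJB2 : clamp sB (fT P.po.length (P.swap.Dh r)) ≤ P.swap.Dh r :=
      clampJ P.po.length sB (P.swap.Dh r) hJB
    have hpsA := psi_le (L := P.ph.length) hsA (fT_le _ _) (fT_le _ _) hftA.1 hftA.2
    have hpsB := psi_le (L := P.po.length) hsB (fT_le _ _) (fT_le _ _) hftB.1 hftB.2
    have hdec : Psi P.ph.length (clamp sA (fT P.ph.length (P.Dh r)))
          (fT P.ph.length (P.Dh r')) +
        Psi P.po.length (clamp sB (fT P.po.length (P.swap.Dh r)))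
          (fT P.po.length (P.swap.Dh r')) ≤ k := by
      rcases not_and_or.mp hsync with h | h
      · have := psi_dec (L := P.ph.length) hsA (fT_le _ _) (fT_le _ _) hftA.1 hftA.2 (by omega)
        omega
      · have := psi_dec (L := P.po.length) hsB (fT_le _ _) (fT_le _ _) hftB.1 hftB.2 (by omega)
        omega
    refine ih c' r' iA iB _ _ hne (by simp [hc'])
      hsA'le (by rw [hc']; simp only [if_neg (Ne.symm hne)]) hsB'le
      (by omega) (by omega) hr'V hdec

end SerPack

end CopAux
namespace CopAux

open SimpleGraph

/-- Main induction: a path-like multigraph is exit-winnable (attractor form) from any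
configuration with both cops on the two ends. -/
theorem pathLike_winF : ∀ (k : ℕ) (M : Multigraph) (u v : ℕ),
    Multiset.card M.edges ≤ k → PathLike M u v →
    ∀ c : Fin 2 → ℕ, (∀ i, c i = u ∨ c i = v) → (∃ i, c i = u) → (∃ i, c i = v) →
    ∀ r ∈ M.verts, ∃ n, WinF (SG M.edges) {u, v} n c r := by
  intro k
  induction k with
  | zero =>
    intro M u v hk h
    exact absurd (pathLike_card_pos h) (by omega)
  | succ k ih =>
    intro M u v hk h c hcall hcu hcv r hr
    have huv := pathLike_ne h
    -- robber standing on an end is immediately caught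
    by_cases hru : r = u
    · obtain ⟨i, hi⟩ := hcu
      exact ⟨0, i, Or.inl (by rw [hi, hru])⟩
    by_cases hrv : r = v
    · obtain ⟨i, hi⟩ := hcv
      exact ⟨0, i, Or.inl (by rw [hi, hrv])⟩
    rcases pathLike_decomp h with hM | ⟨M₁, M₂, hg⟩ | ⟨M₁, M₂, w, hg⟩
    · -- single edge: no vertex left for the robber
      exfalso
      rw [hM] at hr
      simp only [Finset.mem_insert, Finset.mem_singleton] at hr
      tauto
    · -- parallel case
      have hcards : Multiset.card M.edges =
          Multiset.card M₁.edges + Multiset.card M₂.edges := by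
        rw [hg.edges]; simp
      have h1 : Multiset.card M₁.edges ≤ k := by
        have := pathLike_card_pos hg.pl₂; omega
      have h2 : Multiset.card M₂.edges ≤ k := by
        have := pathLike_card_pos hg.pl₁; omega
      have hrV : r ∈ M₁.verts ∪ M₂.verts := by rw [← hg.verts]; exact hr
      rcases Finset.mem_union.mp hrV with hV1 | hV2
      · obtain ⟨n, hn⟩ := ih M₁ u v h1 hg.pl₁ c hcall hcu hcv r hV1
        refine ⟨n, ?_⟩
        rw [hg.edges]
        refine winF_transport (pathLike_edge_mem hg.pl₁) (pathLike_edge_mem hg.pl₂)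
          ?_ (fun a ha _ => ha) n c r hV1 hn
        intro a ha1 ha2
        have : a ∈ M₁.verts ∩ M₂.verts := Finset.mem_inter.mpr ⟨ha1, ha2⟩
        rw [hg.inter] at this
        simp only [Finset.mem_insert, Finset.mem_singleton] at this
        simpa using this
      · obtain ⟨n, hn⟩ := ih M₂ u v h2 hg.pl₂ c hcall hcu hcv r hV2
        refine ⟨n, ?_⟩
        rw [hg.edges, add_comm (M₁.edges)]
        refine winF_transport (pathLike_edge_mem hg.pl₂) (pathLike_edge_mem hg.pl₁)
          ?_ (fun a ha _ => ha) n c r hV2 hn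
        intro a ha2 ha1
        have : a ∈ M₁.verts ∩ M₂.verts := Finset.mem_inter.mpr ⟨ha1, ha2⟩
        rw [hg.inter] at this
        simp only [Finset.mem_insert, Finset.mem_singleton] at this
        simpa using this
    · -- series case
      have hcards : Multiset.card M.edges =
          Multiset.card M₁.edges + Multiset.card M₂.edges := by
        rw [hg.edges]; simp
      have h1 : Multiset.card M₁.edges ≤ k := by
        have := pathLike_card_pos hg.pl₂; omega
      have h2 : Multiset.card M₂.edges ≤ k := by
        have := pathLike_card_pos hg.pl₁; omega
      have huw := pathLike_ne hg.pl₁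
      have hwv := pathLike_ne hg.pl₂
      have hu1 : u ∈ M₁.verts := pathLike_mem_left hg.pl₁
      have hw1 : w ∈ M₁.verts := pathLike_mem_right hg.pl₁
      have hw2 : w ∈ M₂.verts := pathLike_mem_left hg.pl₂
      have hv2 : v ∈ M₂.verts := pathLike_mem_right hg.pl₂
      have hinter : ∀ a, a ∈ M₁.verts → a ∈ M₂.verts → a = w := by
        intro a ha1 ha2
        have : a ∈ M₁.verts ∩ M₂.verts := Finset.mem_inter.mpr ⟨ha1, ha2⟩
        rw [hg.inter] at this
        simpa using this
      have reach₁ : ∀ x ∈ M₁.verts, ∀ y ∈ M₁.verts, (SG M₁.edges).Reachable x y :=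
        pathLike_reach hg.pl₁
      have reach₂ : ∀ x ∈ M₂.verts, ∀ y ∈ M₂.verts, (SG M₂.edges).Reachable x y :=
        pathLike_reach hg.pl₂
      obtain ⟨pA, hpA⟩ := (reach₁ u hu1 w hw1).exists_walk_length_eq_dist
      obtain ⟨pB, hpB⟩ := (reach₂ v hv2 w hw2).exists_walk_length_eq_dist
      have hGadj : ∀ a b, (SG M.edges).Adj a b ↔
          ((SG M₁.edges).Adj a b ∨ (SG M₂.edges).Adj a b) := by
        intro a b
        show (a ≠ b ∧ s(a, b) ∈ M.edges) ↔ _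
        rw [hg.edges]
        constructor
        · rintro ⟨hab, hmem⟩
          rcases Multiset.mem_add.mp hmem with hm | hm
          exacts [Or.inl ⟨hab, hm⟩, Or.inr ⟨hab, hm⟩]
        · rintro (⟨hab, hm⟩ | ⟨hab, hm⟩)
          exacts [⟨hab, Multiset.mem_add.mpr (Or.inl hm)⟩,
            ⟨hab, Multiset.mem_add.mpr (Or.inr hm)⟩]
      have hXmem : ∀ a : ℕ, a ∈ ({u, v} : Set ℕ) ↔ (a = u ∨ a = v) := by
        intro a; simp
      -- transported sub-strategies
      have IHh : ∀ c' : Fin 2 → ℕ, (∀ i, c' i = u ∨ c' i = w) → (∃ i, c' i = u) →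
          (∃ i, c' i = w) → ∀ r' ∈ M₁.verts, ∃ n, WinF (SG M.edges) {u, v} n c' r' := by
        intro c' hca hcu' hcw' r' hr'
        obtain ⟨n, hn⟩ := ih M₁ u w h1 hg.pl₁ c' hca hcu' hcw' r' hr'
        refine ⟨n, ?_⟩
        rw [hg.edges]
        refine winF_transport (X' := {u, w}) (pathLike_edge_mem hg.pl₁)
          (pathLike_edge_mem hg.pl₂) ?_ ?_ n c' r' hr' hn
        · intro a ha1 ha2
          have := hinter a ha1 ha2
          simp [this]
        · intro a ha ha1
          simp only [Set.mem_insert_iff, Set.mem_singleton_iff] at ha ⊢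
          rcases ha with rfl | rfl
          · exact Or.inl rfl
          · exact absurd (hinter a ha1 hv2) (Ne.symm hwv)
      have IHo : ∀ c' : Fin 2 → ℕ, (∀ i, c' i = v ∨ c' i = w) → (∃ i, c' i = v) →
          (∃ i, c' i = w) → ∀ r' ∈ M₂.verts, ∃ n, WinF (SG M.edges) {u, v} n c' r' := by
        intro c' hca hcv' hcw' r' hr'
        obtain ⟨n, hn⟩ := ih M₂ w v h2 hg.pl₂ c'
          (fun i => (hca i).symm) hcw' hcv' r' hr'
        refine ⟨n, ?_⟩
        rw [hg.edges, add_comm (M₁.edges)]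
        refine winF_transport (X' := {w, v}) (pathLike_edge_mem hg.pl₂)
          (pathLike_edge_mem hg.pl₁) ?_ ?_ n c' r' hr' hn
        · intro a ha2 ha1
          have := hinter a ha1 ha2
          simp [this]
        · intro a ha ha2
          simp only [Set.mem_insert_iff, Set.mem_singleton_iff] at ha ⊢
          rcases ha with rfl | rfl
          · exact absurd (hinter a hu1 ha2) huw
          · exact Or.inr rfl
      -- assemble the pack
      set P : SerPack :=
        { Eh := M₁.edges, Eo := M₂.edges, Vh := M₁.verts, Vo := M₂.verts
          h0 := u, o0 := v, wm := w, G := SG M.edges, X := {u, v}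
          hEh := pathLike_edge_mem hg.pl₁, hEo := pathLike_edge_mem hg.pl₂
          hinter := hinter, hh0 := hu1, hwh := hw1, hwo := hw2, ho0 := hv2
          hh0w := huw, ho0w := fun hh => hwv hh.symm
          reachh := reach₁, reacho := reach₂
          hGadj := hGadj, hXmem := hXmem
          ph := pA, hph := hpA, po := pB, hpo := hpB
          IHh := IHh, IHo := IHo }
        with hPdef
      obtain ⟨iA, hiA⟩ := hcu
      obtain ⟨iB, hiB⟩ := hcv
      have hne : iA ≠ iB := by
        intro hh
        rw [hh, hiB] at hiA
        exact huv hiA.symm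
      refine P.catchup
        (Psi pA.length 0 (fT pA.length (P.Dh r)) + Psi pB.length 0 (fT pB.length (P.swap.Dh r)))
        c r iA iB 0 0 hne ?_ (by omega) ?_ (by omega) (by omega) (by omega) ?_ le_rfl
      · rw [hiA, SimpleGraph.Walk.getVert_zero]
      · rw [hiB, SimpleGraph.Walk.getVert_zero]
      · show r ∈ M₁.verts ∪ M₂.verts
        rw [← hg.verts]; exact hr

end CopAux
namespace CopAux

open SimpleGraph

/-- Transfer of the attractor from the ambient `ℕ`-graph to the game graph on the
vertex subtype. -/
lemma winF_game {M : Multigraph} {u v : ℕ} (hP : PathLike M u v)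
    {X' : Set ℕ} {X : Set (↑M.verts : Set ℕ)}
    (hXX : ∀ a : (↑M.verts : Set ℕ), a ∈ X ↔ (a : ℕ) ∈ X') :
    ∀ (n : ℕ) (c : Fin 2 → (↑M.verts : Set ℕ)) (r : (↑M.verts : Set ℕ)),
      WinF (SG M.edges) X' n (fun i => ↑(c i)) ↑r → WinF M.game X n c r := by
  have hstep : ∀ (a b : (↑M.verts : Set ℕ)), Step (SG M.edges) ↑a ↑b → Step M.game a b := by
    rintro a b (hab | hab)
    · exact Or.inl (Subtype.ext hab)
    · exact Or.inr hab
  have hstep' : ∀ (a b : (↑M.verts : Set ℕ)), Step M.game a b → Step (SG M.edges) ↑a ↑b := by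
    rintro a b (rfl | hab)
    · exact Or.inl rfl
    · exact Or.inr hab
  intro n
  induction n with
  | zero =>
    rintro c r ⟨i, hi⟩
    exact ⟨i, hstep _ _ hi⟩
  | succ n ih =>
    rintro c r (⟨i, hi⟩ | ⟨hx, c', hc', hs⟩)
    · exact Or.inl ⟨i, hstep _ _ hi⟩
    · refine Or.inr ⟨fun hh => hx ((hXX r).mp hh), ?_⟩
      have hmem : ∀ i, c' i ∈ M.verts := by
        intro i
        have := (c i).2
        exact step_mem_of_endpoints (fun a b hab => pathLike_edge_mem hP a b hab)
          (by exact this) (hc' i)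
      refine ⟨fun i => ⟨c' i, hmem i⟩, fun i => hstep _ _ (hc' i), ?_⟩
      intro r' hr'
      exact ih _ r' (hs ↑r' (hstep' _ _ hr'))

end CopAux

open CopAux

/-- A finite 2-connected series-parallel graph with a pair of ends `u`, `v` is
`{u, v}`-exit 2-copwin. -/
theorem twoConnected_exit_two_copwin (M : Multigraph) (u v : ℕ)
    (hP : PathLike M u v) (h2conn : TwoConnected M.game)
    (hu : u ∈ (↑M.verts : Set ℕ)) (hv : v ∈ (↑M.verts : Set ℕ)) :
    ExitCopWin M.game 2 {⟨u, hu⟩, ⟨v, hv⟩} := by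
  intro c₀ hX
  have huv := pathLike_ne hP
  obtain ⟨iu, hiu⟩ := hX (Set.mem_insert _ _)
  obtain ⟨iv, hiv⟩ := hX (Set.mem_insert_of_mem _ rfl)
  have hne : iu ≠ iv := by
    intro hh
    rw [hh, hiv] at hiu
    exact huv (congrArg Subtype.val hiu).symm
  have hcall : ∀ i, (c₀ i : ℕ) = u ∨ (c₀ i : ℕ) = v := by
    intro i
    rcases fin2_cases iu iv i hne with rfl | rfl
    · exact Or.inl (by rw [hiu])
    · exact Or.inr (by rw [hiv])
  refine winF_exit c₀ ?_
  intro r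
  obtain ⟨n, hn⟩ := pathLike_winF (Multiset.card M.edges) M u v le_rfl hP
    (fun i => ↑(c₀ i)) hcall ⟨iu, by show ((c₀ iu : ℕ)) = u; rw [hiu]⟩ ⟨iv, by show ((c₀ iv : ℕ)) = v; rw [hiv]⟩ ↑r r.2
  refine ⟨n, winF_game hP ?_ n c₀ r hn⟩
  intro a
  constructor
  · rintro (rfl | rfl)
    · exact Or.inl rfl
    · exact Or.inr rfl
  · rintro (ha | ha)
    · exact Or.inl (Subtype.ext ha)
    · exact Or.inr (Subtype.ext ha)
end

section
/- Let G be a finite path-like series-parallel graph with pair of ends (u, v) that is 2-connected (i.e., consists of a single block), and let H' be a connected component of G − {u, v}. Then the subgraph H of G induced by {u, v} ∪ V(H') is again a path-like series-parallel graph with pair of ends (u, v). -/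
open SimpleGraph

variable {V : Type*}



/-- The sub-multigraph of `M` induced on a finite set `T` of vertices. -/
noncomputable def Multigraph.induce (M : Multigraph) (T : Finset ℕ) : Multigraph :=
  ⟨M.verts ∩ T,
    @Multiset.filter (Sym2 ℕ) (fun e => ∀ x ∈ e, x ∈ T) (Classical.decPred _) M.edges⟩

lemma pl_inv {M : Multigraph} {u v : ℕ} (h : PathLike M u v) :
    u ∈ M.verts ∧ v ∈ M.verts ∧ u ≠ v ∧
    (∀ e ∈ M.edges, ¬ e.IsDiag ∧ ∀ z ∈ e, z ∈ M.verts) ∧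
    (∀ z ∈ M.verts, ∃ e ∈ M.edges, z ∈ e) := by
  induction h with
  | base u v huv =>
    refine ⟨by simp, by simp, huv, ?_, ?_⟩
    · intro e he
      simp only [Multiset.mem_singleton] at he
      subst he
      exact ⟨by simp [Sym2.mk_isDiag_iff, huv], by simp +contextual [Sym2.mem_iff]⟩
    · intro z hz
      refine ⟨s(u, v), by simp, ?_⟩
      simp only [Finset.mem_insert, Finset.mem_singleton] at hz
      rcases hz with rfl | rfl <;> simp
  | dup e he h ih =>
    obtain ⟨h1, h2, h3, h4, h5⟩ := ih
    refine ⟨h1, h2, h3, ?_, ?_⟩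
    · intro f hf
      rcases Multiset.mem_cons.1 hf with rfl | hf
      · exact h4 _ he
      · exact h4 _ hf
    · intro z hz
      obtain ⟨f, hf, hzf⟩ := h5 z hz
      exact ⟨f, Multiset.mem_cons_of_mem hf, hzf⟩
  | subdiv x y he w hw h ih =>
    obtain ⟨h1, h2, h3, h4, h5⟩ := ih
    have hxm := (h4 _ he).2 x (by simp)
    have hym := (h4 _ he).2 y (by simp)
    have hx : _ ∧ _ := ⟨hxm, hym⟩
    have hxy : x ≠ y := by
      have := (h4 _ he).1
      simpa [Sym2.mk_isDiag_iff] using this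
    refine ⟨Finset.mem_insert_of_mem h1, Finset.mem_insert_of_mem h2, h3, ?_, ?_⟩
    · intro f hf
      rcases Multiset.mem_cons.1 hf with rfl | hf
      · constructor
        · simp only [Sym2.mk_isDiag_iff]
          rintro rfl; exact hw hx.1
        · intro z hz
          rcases Sym2.mem_iff.1 hz with rfl | rfl
          · exact Finset.mem_insert_of_mem hx.1
          · exact Finset.mem_insert_self _ _
      · rcases Multiset.mem_cons.1 hf with rfl | hf
        · constructor
          · simp only [Sym2.mk_isDiag_iff]
            rintro rfl; exact hw hx.2
          · intro z hz
            rcases Sym2.mem_iff.1 hz with rfl | rfl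
            · exact Finset.mem_insert_self _ _
            · exact Finset.mem_insert_of_mem hx.2
        · have hf' := Multiset.mem_of_mem_erase hf
          exact ⟨(h4 _ hf').1, fun z hz => Finset.mem_insert_of_mem ((h4 _ hf').2 z hz)⟩
    · intro z hz
      rcases Finset.mem_insert.1 hz with rfl | hz
      · exact ⟨s(x, z), by simp, by simp⟩
      · by_cases hzx : z = x
        · subst hzx; exact ⟨s(z, w), by simp, by simp⟩
        by_cases hzy : z = y
        · subst hzy; exact ⟨s(w, z), by simp, by simp⟩
        obtain ⟨f, hf, hzf⟩ := h5 z hz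
        have hfne : f ≠ s(x, y) := by
          rintro rfl
          rcases Sym2.mem_iff.1 hzf with rfl | rfl
          · exact hzx rfl
          · exact hzy rfl
        exact ⟨f, Multiset.mem_cons_of_mem (Multiset.mem_cons_of_mem
          ((Multiset.mem_erase_of_ne hfne).2 hf)), hzf⟩

lemma pl_replicate (u v : ℕ) (huv : u ≠ v) (m : ℕ) (hm : m ≠ 0) :
    PathLike ⟨{u, v}, Multiset.replicate m s(u, v)⟩ u v := by
  induction m with
  | zero => exact absurd rfl hm
  | succ n ih =>
    rcases Nat.eq_zero_or_pos n with rfl | hn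
    · exact PathLike.base u v huv
    · have h := ih hn.ne'
      have := PathLike.dup (M := ⟨{u, v}, Multiset.replicate n s(u, v)⟩) s(u, v)
        (by simp [Multiset.mem_replicate, hn.ne']) h
      simpa [Multiset.replicate_succ] using this

lemma two_le_card_of_mem {α : Type*} [DecidableEq α] {s : Multiset α} {a b : α}
    (ha : a ∈ s) (hb : b ∈ s) (hab : a ≠ b) : 2 ≤ Multiset.card s := by
  have hb' : b ∈ s.erase a := (Multiset.mem_erase_of_ne (fun hh => hab hh.symm)).2 hb
  have h1 : s = a ::ₘ s.erase a := (Multiset.cons_erase ha).symm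
  have h2 : 0 < Multiset.card (s.erase a) :=
    Multiset.card_pos.2 (fun h0 => by simp [h0] at hb')
  rw [h1, Multiset.card_cons]
  omega

lemma pl_undup : ∀ {M : Multigraph} {u v : ℕ}, PathLike M u v →
    s(u, v) ∈ M.edges → 2 ≤ Multiset.card M.edges →
    PathLike ⟨M.verts, M.edges.erase s(u, v)⟩ u v := by
  intro M₀ u₀ v₀ h
  induction h with
  | base u v huv => intro _ h2; simp at h2
  | @dup M u v e hee h ih =>
    intro he h2
    by_cases heq : e = s(u, v)
    · subst heq
      simpa [Multiset.erase_cons_head] using h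
    · have huvE : s(u, v) ∈ M.edges := by
        rcases Multiset.mem_cons.1 he with h' | h'
        · exact absurd h'.symm heq
        · exact h'
      rcases Nat.lt_or_ge (Multiset.card M.edges) 2 with hc | hc
      · have h1 : Multiset.card M.edges = 1 := by
          have : 0 < Multiset.card M.edges :=
            Multiset.card_pos.2 (fun h0 => by simp [h0] at huvE)
          omega
        obtain ⟨a, ha⟩ := Multiset.card_eq_one.1 h1
        rw [ha] at huvE hee
        simp only [Multiset.mem_singleton] at huvE hee
        exact absurd (hee.trans huvE.symm) heq
      · have ih' := ih huvE hc
        have := PathLike.dup (M := ⟨M.verts, M.edges.erase s(u, v)⟩) e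
          ((Multiset.mem_erase_of_ne heq).2 hee) ih'
        simpa [Multiset.erase_cons_tail _ heq] using this
  | @subdiv M u v x y hee w hw h ih =>
    intro he _
    obtain ⟨h1, h2', _, h4, _⟩ := pl_inv h
    have hxw : s(x, w) ≠ s(u, v) := by
      intro hh
      have : w ∈ s(u, v) := by rw [← hh]; simp
      rcases Sym2.mem_iff.1 this with rfl | rfl
      · exact hw h1
      · exact hw h2'
    have hwy : s(w, y) ≠ s(u, v) := by
      intro hh
      have : w ∈ s(u, v) := by rw [← hh]; simp
      rcases Sym2.mem_iff.1 this with rfl | rfl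
      · exact hw h1
      · exact hw h2'
    have huv' : s(u, v) ∈ M.edges.erase s(x, y) := by
      rcases Multiset.mem_cons.1 he with h' | h'
      · exact absurd h' hxw.symm
      rcases Multiset.mem_cons.1 h' with h' | h'
      · exact absurd h' hwy.symm
      · exact h'
    have huvE : s(u, v) ∈ M.edges := Multiset.mem_of_mem_erase huv'
    have hxyE' : s(x, y) ∈ M.edges.erase s(u, v) := by
      by_cases hxyuv : s(x, y) = s(u, v)
      · rw [hxyuv]; rw [hxyuv] at huv'; exact huv'
      · exact (Multiset.mem_erase_of_ne hxyuv).2 hee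
    have hcard : 2 ≤ Multiset.card M.edges := by
      have : 0 < Multiset.card (M.edges.erase s(x, y)) :=
        Multiset.card_pos.2 (fun h0 => by simp [h0] at huv')
      have h5 := Multiset.card_erase_of_mem hee
      rw [Nat.pred_eq_sub_one] at h5
      omega
    have ih' := ih huvE hcard
    have := PathLike.subdiv (M := ⟨M.verts, M.edges.erase s(u, v)⟩) x y hxyE' w hw ih'
    have hgoal : (s(x, w) ::ₘ s(w, y) ::ₘ M.edges.erase s(x, y)).erase s(u, v) =
        s(x, w) ::ₘ s(w, y) ::ₘ (M.edges.erase s(u, v)).erase s(x, y) := by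
      rw [Multiset.erase_cons_tail _ (Ne.symm (Ne.symm hxw)),
        Multiset.erase_cons_tail _ hwy, Multiset.erase_comm]
    simp only [hgoal]
    exact this

lemma filter_erase_pos {α : Type*} [DecidableEq α] (p : α → Prop) [DecidablePred p]
    {a : α} (hpa : p a) (s : Multiset α) :
    (s.erase a).filter p = (s.filter p).erase a := by
  by_cases ha : a ∈ s
  · have h1 : s = a ::ₘ s.erase a := (Multiset.cons_erase ha).symm
    conv_rhs => rw [h1]
    rw [Multiset.filter_cons_of_pos _ hpa, Multiset.erase_cons_head]
  · rw [Multiset.erase_of_notMem ha, Multiset.erase_of_notMem]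
    intro hc
    exact ha (Multiset.mem_of_mem_filter hc)

lemma filter_erase_neg {α : Type*} [DecidableEq α] (p : α → Prop) [DecidablePred p]
    {a : α} (hpa : ¬ p a) (s : Multiset α) :
    (s.erase a).filter p = s.filter p := by
  by_cases ha : a ∈ s
  · have h1 : s = a ::ₘ s.erase a := (Multiset.cons_erase ha).symm
    conv_rhs => rw [h1]
    rw [Multiset.filter_cons_of_neg _ hpa]
  · rw [Multiset.erase_of_notMem ha]

lemma reroute (M : Multigraph) (x y w : ℕ) (hxy : x ≠ y) (hxyE : s(x, y) ∈ M.edges)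
    (hwE : ∀ e ∈ M.edges, w ∉ e) (S : Finset ℕ) (hne : (S.erase w).Nonempty)
    (hconn : ((Multigraph.toSimple
        ⟨insert w M.verts, s(x, w) ::ₘ s(w, y) ::ₘ M.edges.erase s(x, y)⟩).induce
        (↑S : Set ℕ)).Connected) :
    (M.toSimple.induce (↑(S.erase w) : Set ℕ)).Connected := by
  set M' : Multigraph := ⟨insert w M.verts, s(x, w) ::ₘ s(w, y) ::ₘ M.edges.erase s(x, y)⟩
    with hM'
  set G₁ := M'.toSimple.induce (↑S : Set ℕ) with hG₁
  set G₂ := M.toSimple.induce (↑(S.erase w) : Set ℕ) with hG₂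
  -- basic adjacency facts
  have A1 : ∀ a c : ℕ, a ≠ w → c ≠ w → M'.toSimple.Adj a c → M.toSimple.Adj a c := by
    intro a c ha hc h
    obtain ⟨hac, hmem⟩ := h
    refine ⟨hac, ?_⟩
    rcases Multiset.mem_cons.1 hmem with h' | h'
    · exfalso
      have : w ∈ s(a, c) := by rw [h']; simp
      rcases Sym2.mem_iff.1 this with rfl | rfl
      · exact ha rfl
      · exact hc rfl
    rcases Multiset.mem_cons.1 h' with h' | h'
    · exfalso
      have : w ∈ s(a, c) := by rw [h']; simp
      rcases Sym2.mem_iff.1 this with rfl | rfl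
      · exact ha rfl
      · exact hc rfl
    · exact Multiset.mem_of_mem_erase h'
  have A2 : ∀ a : ℕ, M'.toSimple.Adj a w → a = x ∨ a = y := by
    intro a h
    obtain ⟨haw, hmem⟩ := h
    rcases Multiset.mem_cons.1 hmem with h' | h'
    · left
      rcases Sym2.eq_iff.1 h' with ⟨h1, _⟩ | ⟨h1, h2⟩
      · exact h1
      · exact absurd h1 haw
    rcases Multiset.mem_cons.1 h' with h' | h'
    · right
      rcases Sym2.eq_iff.1 h' with ⟨h1, h2⟩ | ⟨h1, h2⟩
      · exact absurd h1 haw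
      · exact h1
    · exact absurd (hwE _ (Multiset.mem_of_mem_erase h')) (by simp)
  have Axy : M.toSimple.Adj x y := ⟨hxy, hxyE⟩
  -- the rerouting relation
  set R : ℕ → ℕ → Prop := fun a b =>
    ∀ (ha : a ∈ (↑(S.erase w) : Set ℕ)) (hb : b ∈ (↑(S.erase w) : Set ℕ)),
      G₂.Reachable ⟨a, ha⟩ ⟨b, hb⟩ with hR
  have Rstep : ∀ a c : ℕ, c ∈ (↑(S.erase w) : Set ℕ) → M.toSimple.Adj a c →
      ∀ b : ℕ, R c b → R a b := by
    intro a c hcS hadj b hcb ha hb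
    exact (SimpleGraph.Adj.reachable
      (by exact hadj : G₂.Adj ⟨a, ha⟩ ⟨c, hcS⟩)).trans (hcb hcS hb)
  have key : ∀ (a b : (↑S : Set ℕ)) (p : G₁.Walk a b),
      ((a : ℕ) ≠ w → (b : ℕ) ≠ w → R (a : ℕ) (b : ℕ)) ∧
      ((a : ℕ) = w → (b : ℕ) ≠ w → ∀ z : ℕ, z ∈ (↑(S.erase w) : Set ℕ) →
        (z = x ∨ z = y) → R z (b : ℕ)) := by
    intro a b p
    induction p with
    | nil =>
      refine ⟨fun hna hnb ha hb => SimpleGraph.Reachable.refl _, fun haw hnb => absurd haw hnb⟩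
    | @cons a c b hadj q ih =>
      have hac : M'.toSimple.Adj (a : ℕ) (c : ℕ) := hadj
      constructor
      · intro hna hnb
        by_cases hcw : (c : ℕ) = w
        · have ha_xy : (a : ℕ) = x ∨ (a : ℕ) = y := by
            apply A2
            rwa [hcw] at hac
          have haS' : (a : ℕ) ∈ (↑(S.erase w) : Set ℕ) :=
            Finset.mem_coe.2 (Finset.mem_erase.2 ⟨hna, Finset.mem_coe.1 a.2⟩)
          exact ih.2 hcw hnb (a : ℕ) haS' ha_xy
        · have h1 := ih.1 hcw hnb
          have hcS' : (c : ℕ) ∈ (↑(S.erase w) : Set ℕ) :=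
            Finset.mem_coe.2 (Finset.mem_erase.2 ⟨hcw, Finset.mem_coe.1 c.2⟩)
          exact Rstep (a : ℕ) (c : ℕ) hcS' (A1 _ _ hna hcw hac) (b : ℕ) h1
      · intro haw hnb z hzS' hz_xy
        have hcw : (c : ℕ) ≠ w := fun hh => hac.ne (haw.trans hh.symm)
        have hc_xy : (c : ℕ) = x ∨ (c : ℕ) = y := by
          apply A2
          have := hac.symm
          rwa [haw] at this
        have h1 := ih.1 hcw hnb
        by_cases hzc : z = (c : ℕ)
        · exact hzc ▸ h1
        · have hadj_zc : M.toSimple.Adj z (c : ℕ) := by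
            rcases hz_xy with rfl | rfl <;> rcases hc_xy with hc | hc
            · exact absurd hc.symm hzc
            · rw [hc]; exact Axy
            · rw [hc]; exact Axy.symm
            · exact absurd hc.symm hzc
          have hcS' : (c : ℕ) ∈ (↑(S.erase w) : Set ℕ) :=
            Finset.mem_coe.2 (Finset.mem_erase.2 ⟨hcw, Finset.mem_coe.1 c.2⟩)
          exact Rstep z (c : ℕ) hcS' hadj_zc (b : ℕ) h1
  obtain ⟨z0, hz0⟩ := hne
  haveI : Nonempty ↑(↑(S.erase w) : Set ℕ) := ⟨⟨z0, Finset.mem_coe.2 hz0⟩⟩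
  refine ⟨fun p q => ?_⟩
  have hpS : (p : ℕ) ∈ S := Finset.mem_of_mem_erase (Finset.mem_coe.1 p.2)
  have hqS : (q : ℕ) ∈ S := Finset.mem_of_mem_erase (Finset.mem_coe.1 q.2)
  have hpw : (p : ℕ) ≠ w := (Finset.mem_erase.1 (Finset.mem_coe.1 p.2)).1
  have hqw : (q : ℕ) ≠ w := (Finset.mem_erase.1 (Finset.mem_coe.1 q.2)).1
  have hr := hconn.preconnected ⟨(p : ℕ), Finset.mem_coe.2 hpS⟩ ⟨(q : ℕ), Finset.mem_coe.2 hqS⟩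
  refine hr.elim fun pw => ?_
  have := (key _ _ pw).1 hpw hqw p.2 q.2
  exact this

lemma sym2_eq_of_mem {u v : ℕ} (huv : u ≠ v) (e : Sym2 ℕ) (hd : ¬ e.IsDiag)
    (h : ∀ z ∈ e, z = u ∨ z = v) : e = s(u, v) := by
  induction e using Sym2.ind with
  | _ a b =>
    rcases h a (by simp) with rfl | rfl <;> rcases h b (by simp) with rfl | rfl
    · simp [Sym2.mk_isDiag_iff] at hd
    · rfl
    · exact Sym2.eq_swap
    · simp [Sym2.mk_isDiag_iff] at hd

lemma pl_main : ∀ {M : Multigraph} {u v : ℕ}, PathLike M u v →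
    ∀ S : Finset ℕ, (↑S : Set ℕ) ⊆ (↑M.verts : Set ℕ) \ {u, v} → S.Nonempty →
    (M.toSimple.induce (↑S : Set ℕ)).Connected →
    (∀ a ∈ S, ∀ b : ℕ, b ∈ (↑M.verts : Set ℕ) \ {u, v} → M.toSimple.Adj a b → b ∈ S) →
    PathLike (M.induce (insert u (insert v S))) u v := by
  intro M₀ u₀ v₀ h
  induction h with
  | base u v huv =>
    intro S hS hSne hSconn hSmax
    exfalso
    obtain ⟨a, ha⟩ := hSne
    have := hS (Finset.mem_coe.2 ha)
    simp at this
  | @dup M u v e hee h ih =>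
    intro S hS hSne hSconn hSmax
    have hts : (Multigraph.toSimple ⟨M.verts, e ::ₘ M.edges⟩) = M.toSimple := by
      ext a b
      simp only [Multigraph.toSimple, Multiset.mem_cons]
      constructor
      · rintro ⟨h1, (h2 | h2)⟩
        · exact ⟨h1, h2 ▸ hee⟩
        · exact ⟨h1, h2⟩
      · rintro ⟨h1, h2⟩
        exact ⟨h1, Or.inr h2⟩
    rw [hts] at hSconn hSmax
    have IH' := ih S hS hSne hSconn hSmax
    unfold Multigraph.induce at IH' ⊢
    by_cases hPe : ∀ z ∈ e, z ∈ insert u (insert v S)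
    · rw [@Multiset.filter_cons_of_pos _ _ (Classical.decPred _) _ _ hPe]
      exact PathLike.dup e ((@Multiset.mem_filter _ _ (Classical.decPred _) _ _).2 ⟨hee, hPe⟩) IH'
    · rw [@Multiset.filter_cons_of_neg _ _ (Classical.decPred _) _ _ hPe]
      exact IH'
  | @subdiv M u v x y hee w hw h ih =>
    intro S hS hSne hSconn hSmax
    obtain ⟨hu, hv, huv, h4, h5⟩ := pl_inv h
    have hxV : x ∈ M.verts := (h4 _ hee).2 x (by simp)
    have hyV : y ∈ M.verts := (h4 _ hee).2 y (by simp)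
    have hxy : x ≠ y := by simpa [Sym2.mk_isDiag_iff] using (h4 _ hee).1
    have hwu : w ≠ u := fun hh => hw (hh ▸ hu)
    have hwv : w ≠ v := fun hh => hw (hh ▸ hv)
    have hxw : x ≠ w := fun hh => hw (hh ▸ hxV)
    have hyw : y ≠ w := fun hh => hw (hh ▸ hyV)
    have hwE : ∀ e ∈ M.edges, w ∉ e := fun e he' hwe => hw ((h4 e he').2 w hwe)
    have hSd : ∀ a ∈ S, a ∈ insert w M.verts ∧ a ≠ u ∧ a ≠ v := by
      intro a ha
      have := hS (Finset.mem_coe.2 ha)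
      obtain ⟨h1, h2⟩ := this
      refine ⟨Finset.mem_coe.1 h1, ?_, ?_⟩ <;> intro hh <;> exact h2 (by simp [hh])
    -- adjacency with w forces x or y
    have A2 : ∀ a : ℕ, (Multigraph.toSimple ⟨insert w M.verts,
        s(x, w) ::ₘ s(w, y) ::ₘ M.edges.erase s(x, y)⟩).Adj a w → a = x ∨ a = y := by
      intro a hadj
      obtain ⟨haw, hmem⟩ := hadj
      rcases Multiset.mem_cons.1 hmem with h' | h'
      · left
        rcases Sym2.eq_iff.1 h' with ⟨h1, _⟩ | ⟨h1, _⟩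
        · exact h1
        · exact absurd h1 haw
      rcases Multiset.mem_cons.1 h' with h' | h'
      · right
        rcases Sym2.eq_iff.1 h' with ⟨h1, _⟩ | ⟨h1, _⟩
        · exact absurd h1 haw
        · exact h1
      · exact absurd (hwE _ (Multiset.mem_of_mem_erase h')) (by simp)
    by_cases hwS : w ∈ S
    · -- w belongs to the component S
      -- locate x and y
      have hx3 : x = u ∨ x = v ∨ x ∈ S := by
        by_cases hxu : x = u
        · exact Or.inl hxu
        by_cases hxv : x = v
        · exact Or.inr (Or.inl hxv)
        refine Or.inr (Or.inr (hSmax w hwS x ⟨?_, ?_⟩ ?_))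
        · exact Finset.mem_coe.2 (Finset.mem_insert_of_mem hxV)
        · simp [hxu, hxv]
        · exact ⟨Ne.symm hxw, by rw [Sym2.eq_swap]; exact Multiset.mem_cons_self _ _⟩
      have hy3 : y = u ∨ y = v ∨ y ∈ S := by
        by_cases hyu : y = u
        · exact Or.inl hyu
        by_cases hyv : y = v
        · exact Or.inr (Or.inl hyv)
        refine Or.inr (Or.inr (hSmax w hwS y ⟨?_, ?_⟩ ?_))
        · exact Finset.mem_coe.2 (Finset.mem_insert_of_mem hyV)
        · simp [hyu, hyv]
        · exact ⟨Ne.symm hyw, Multiset.mem_cons_of_mem (Multiset.mem_cons_self _ _)⟩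
      by_cases hS'ne : (S.erase w).Nonempty
      · -- S minus w is still nonempty
        have hS'sub : (↑(S.erase w) : Set ℕ) ⊆ (↑M.verts : Set ℕ) \ {u, v} := by
          intro a haset
          have ha : a ∈ S.erase w := Finset.mem_coe.1 haset
          have haw : a ≠ w := (Finset.mem_erase.1 ha).1
          have haS : a ∈ S := Finset.mem_of_mem_erase ha
          obtain ⟨h1, h2, h3⟩ := hSd a haS
          rcases Finset.mem_insert.1 h1 with rfl | h1
          · exact absurd rfl haw
          · exact ⟨Finset.mem_coe.2 h1, by simp [h2, h3]⟩
        have hS'conn := reroute M x y w hxy hee hwE S hS'ne hSconn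
        have hS'max : ∀ a ∈ S.erase w, ∀ b : ℕ, b ∈ (↑M.verts : Set ℕ) \ {u, v} →
            M.toSimple.Adj a b → b ∈ S.erase w := by
          intro a ha b hb hadj
          have hbV : b ∈ M.verts := Finset.mem_coe.1 hb.1
          have hbw : b ≠ w := fun hh => hw (hh ▸ hbV)
          have hbu : b ≠ u := fun hh => hb.2 (by simp [hh])
          have hbv : b ≠ v := fun hh => hb.2 (by simp [hh])
          refine Finset.mem_erase.2 ⟨hbw, ?_⟩
          by_cases hab : s(a, b) = s(x, y)
          · rcases Sym2.eq_iff.1 hab with ⟨ha1, hb1⟩ | ⟨ha1, hb1⟩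
            · rw [hb1]
              rcases hy3 with h' | h' | h'
              · exact absurd (hb1.trans h') hbu
              · exact absurd (hb1.trans h') hbv
              · exact h'
            · rw [hb1]
              rcases hx3 with h' | h' | h'
              · exact absurd (hb1.trans h') hbu
              · exact absurd (hb1.trans h') hbv
              · exact h'
          · have hadj' : (Multigraph.toSimple ⟨insert w M.verts,
                s(x, w) ::ₘ s(w, y) ::ₘ M.edges.erase s(x, y)⟩).Adj a b :=
              ⟨hadj.1, Multiset.mem_cons_of_mem (Multiset.mem_cons_of_mem
                ((Multiset.mem_erase_of_ne hab).2 hadj.2))⟩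
            exact hSmax a (Finset.mem_of_mem_erase ha) b
              ⟨Finset.mem_coe.2 (Finset.mem_insert_of_mem hbV), hb.2⟩ hadj'
        have IH' := ih (S.erase w) hS'sub hS'ne hS'conn hS'max
        set T' : Finset ℕ := insert u (insert v (S.erase w)) with hT'
        have hxT' : x ∈ T' := by
          rcases hx3 with rfl | rfl | h'
          · exact Finset.mem_insert_self _ _
          · exact Finset.mem_insert_of_mem (Finset.mem_insert_self _ _)
          · exact Finset.mem_insert_of_mem (Finset.mem_insert_of_mem
              (Finset.mem_erase.2 ⟨hxw, h'⟩))
        have hyT' : y ∈ T' := by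
          rcases hy3 with rfl | rfl | h'
          · exact Finset.mem_insert_self _ _
          · exact Finset.mem_insert_of_mem (Finset.mem_insert_self _ _)
          · exact Finset.mem_insert_of_mem (Finset.mem_insert_of_mem
              (Finset.mem_erase.2 ⟨hyw, h'⟩))
        have hTT' : insert u (insert v S) = insert w T' := by
          ext a
          simp only [hT', Finset.mem_insert, Finset.mem_erase]
          constructor
          · rintro (rfl | rfl | hS0)
            · exact Or.inr (Or.inl rfl)
            · exact Or.inr (Or.inr (Or.inl rfl))
            · by_cases haw : a = w
              · exact Or.inl haw
              · exact Or.inr (Or.inr (Or.inr ⟨haw, hS0⟩))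
          · rintro (rfl | rfl | rfl | ⟨_, hS0⟩)
            · exact Or.inr (Or.inr hwS)
            · exact Or.inl rfl
            · exact Or.inr (Or.inl rfl)
            · exact Or.inr (Or.inr hS0)
        unfold Multigraph.induce at IH' ⊢
        rw [hTT']
        have hverts : insert w M.verts ∩ insert w T' = insert w (M.verts ∩ T') := by
          ext a
          simp only [Finset.mem_inter, Finset.mem_insert]
          by_cases haw : a = w
          · simp [haw]
          · simp [haw]
        rw [hverts]
        have hPxw : ∀ z ∈ s(x, w), z ∈ insert w T' := by
          intro z hz
          rcases Sym2.mem_iff.1 hz with rfl | rfl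
          · exact Finset.mem_insert_of_mem hxT'
          · exact Finset.mem_insert_self _ _
        have hPwy : ∀ z ∈ s(w, y), z ∈ insert w T' := by
          intro z hz
          rcases Sym2.mem_iff.1 hz with rfl | rfl
          · exact Finset.mem_insert_self _ _
          · exact Finset.mem_insert_of_mem hyT'
        rw [@Multiset.filter_cons_of_pos _ _ (Classical.decPred _) _ _ hPxw,
          @Multiset.filter_cons_of_pos _ _ (Classical.decPred _) _ _ hPwy]
        have hPxyT' : ∀ z ∈ s(x, y), z ∈ T' := by
          intro z hz
          rcases Sym2.mem_iff.1 hz with rfl | rfl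
          · exact hxT'
          · exact hyT'
        have hfc : @Multiset.filter _ (fun e => ∀ z ∈ e, z ∈ insert w T')
            (Classical.decPred _) (M.edges.erase s(x, y)) =
            @Multiset.filter _ (fun e => ∀ z ∈ e, z ∈ T')
            (Classical.decPred _) (M.edges.erase s(x, y)) := by
          refine @Multiset.filter_congr _ _ _ (Classical.decPred _) (Classical.decPred _) _ ?_
          intro e hemem
          have hwe : w ∉ e := hwE e (Multiset.mem_of_mem_erase hemem)
          constructor
          · intro hp z hz
            rcases Finset.mem_insert.1 (hp z hz) with rfl | h'
            · exact absurd hz hwe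
            · exact h'
          · intro hp z hz
            exact Finset.mem_insert_of_mem (hp z hz)
        rw [hfc, @filter_erase_pos _ _ _ (Classical.decPred _) _ hPxyT' M.edges]
        exact PathLike.subdiv (M := ⟨M.verts ∩ T',
          @Multiset.filter _ (fun e => ∀ z ∈ e, z ∈ T') (Classical.decPred _) M.edges⟩)
          x y ((@Multiset.mem_filter _ _ (Classical.decPred _) _ _).2 ⟨hee, hPxyT'⟩) w
          (fun hmem => hw (Finset.mem_inter.1 hmem).1) IH'
      · -- S = {w}
        have hSsingle : ∀ a ∈ S, a = w := by
          intro a ha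
          by_contra haw
          exact hS'ne ⟨a, Finset.mem_erase.2 ⟨haw, ha⟩⟩
        have hx2 : x = u ∨ x = v := by
          rcases hx3 with h' | h' | h'
          · exact Or.inl h'
          · exact Or.inr h'
          · exact absurd (hSsingle x h') hxw
        have hy2 : y = u ∨ y = v := by
          rcases hy3 with h' | h' | h'
          · exact Or.inl h'
          · exact Or.inr h'
          · exact absurd (hSsingle y h') hyw
        have hsxy : s(x, y) = s(u, v) := by
          rcases hx2 with rfl | rfl <;> rcases hy2 with hy' | hy'
          · exact absurd hy'.symm hxy
          · rw [hy']
          · rw [hy']; exact Sym2.eq_swap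
          · exact absurd hy'.symm hxy
        have hmE : s(u, v) ∈ M.edges := hsxy ▸ hee
        have hm0 : Multiset.count s(u, v) M.edges ≠ 0 := by
          simpa [Multiset.count_eq_zero] using hmE
        have hbase := pl_replicate u v huv (Multiset.count s(u, v) M.edges) hm0
        have hsub := PathLike.subdiv
          (M := ⟨{u, v}, Multiset.replicate (Multiset.count s(u, v) M.edges) s(u, v)⟩)
          x y (by rw [hsxy]; exact Multiset.mem_replicate.2 ⟨hm0, rfl⟩) w
          (by simp [hwu, hwv]) hbase
        have her : (Multiset.replicate (Multiset.count s(u, v) M.edges) s(u, v)).erase s(x, y)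
            = Multiset.replicate (Multiset.count s(u, v) M.edges - 1) s(u, v) := by
          rw [hsxy]
          obtain ⟨n, hn⟩ : ∃ n, Multiset.count s(u, v) M.edges = n + 1 :=
            ⟨Multiset.count s(u, v) M.edges - 1, by omega⟩
          rw [hn, Multiset.replicate_succ, Multiset.erase_cons_head]
          simp
        rw [her] at hsub
        unfold Multigraph.induce
        have hverts : insert w M.verts ∩ (insert u (insert v S)) = insert w {u, v} := by
          ext a
          simp only [Finset.mem_inter, Finset.mem_insert, Finset.mem_singleton]
          constructor
          · rintro ⟨h1, h2⟩
            rcases h2 with rfl | rfl | h2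
            · exact Or.inr (Or.inl rfl)
            · exact Or.inr (Or.inr rfl)
            · exact Or.inl (hSsingle a h2)
          · rintro (rfl | rfl | rfl)
            · exact ⟨Or.inl rfl, Or.inr (Or.inr hwS)⟩
            · exact ⟨Or.inr hu, Or.inl rfl⟩
            · exact ⟨Or.inr hv, Or.inr (Or.inl rfl)⟩
        rw [hverts]
        have hPxw : ∀ z ∈ s(x, w), z ∈ insert u (insert v S) := by
          intro z hz
          rcases Sym2.mem_iff.1 hz with rfl | rfl
          · rcases hx2 with rfl | rfl
            · exact Finset.mem_insert_self _ _
            · exact Finset.mem_insert_of_mem (Finset.mem_insert_self _ _)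
          · exact Finset.mem_insert_of_mem (Finset.mem_insert_of_mem hwS)
        have hPwy : ∀ z ∈ s(w, y), z ∈ insert u (insert v S) := by
          intro z hz
          rcases Sym2.mem_iff.1 hz with rfl | rfl
          · exact Finset.mem_insert_of_mem (Finset.mem_insert_of_mem hwS)
          · rcases hy2 with rfl | rfl
            · exact Finset.mem_insert_self _ _
            · exact Finset.mem_insert_of_mem (Finset.mem_insert_self _ _)
        rw [@Multiset.filter_cons_of_pos _ _ (Classical.decPred _) _ _ hPxw,
          @Multiset.filter_cons_of_pos _ _ (Classical.decPred _) _ _ hPwy]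
        have hfilt : @Multiset.filter _ (fun e => ∀ z ∈ e, z ∈ insert u (insert v S))
            (Classical.decPred _) (M.edges.erase s(x, y)) =
            Multiset.replicate (Multiset.count s(u, v) M.edges - 1) s(u, v) := by
          have hcongr : @Multiset.filter _ (fun e => ∀ z ∈ e, z ∈ insert u (insert v S))
              (Classical.decPred _) (M.edges.erase s(x, y)) =
              Multiset.filter (· = s(u, v)) (M.edges.erase s(x, y)) := by
            refine @Multiset.filter_congr _ _ _ (Classical.decPred _) _ _ ?_
            intro e hemem
            have heE : e ∈ M.edges := Multiset.mem_of_mem_erase hemem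
            have hwe : w ∉ e := hwE e heE
            constructor
            · intro hp
              refine sym2_eq_of_mem huv e (h4 e heE).1 ?_
              intro z hz
              rcases Finset.mem_insert.1 (hp z hz) with rfl | h'
              · exact Or.inl rfl
              rcases Finset.mem_insert.1 h' with rfl | h'
              · exact Or.inr rfl
              · exact absurd hz (by rw [hSsingle z h']; exact hwe)
            · rintro rfl z hz
              rcases Sym2.mem_iff.1 hz with rfl | rfl
              · exact Finset.mem_insert_self _ _
              · exact Finset.mem_insert_of_mem (Finset.mem_insert_self _ _)
          rw [hcongr, Multiset.filter_eq', hsxy, Multiset.count_erase_self]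
        rw [hfilt]
        exact hsub
    · -- w does not belong to S
      have hxS : x ∉ S := fun hxs => hwS (hSmax x hxs w
        ⟨Finset.mem_coe.2 (Finset.mem_insert_self w M.verts), by simp [hwu, hwv]⟩
        ⟨hxw, Multiset.mem_cons_self _ _⟩)
      have hyS : y ∉ S := fun hys => hwS (hSmax y hys w
        ⟨Finset.mem_coe.2 (Finset.mem_insert_self w M.verts), by simp [hwu, hwv]⟩
        ⟨hyw, by rw [show s(y, w) = s(w, y) from Sym2.eq_swap]; exact Multiset.mem_cons_of_mem (Multiset.mem_cons_self _ _)⟩)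
      have hSV : (↑S : Set ℕ) ⊆ (↑M.verts : Set ℕ) \ {u, v} := by
        intro a haset
        have haS : a ∈ S := Finset.mem_coe.1 haset
        obtain ⟨h1, h2, h3⟩ := hSd a haS
        rcases Finset.mem_insert.1 h1 with rfl | h1
        · exact absurd haS hwS
        · exact ⟨Finset.mem_coe.2 h1, by simp [h2, h3]⟩
      have hind : M.toSimple.induce (↑S : Set ℕ) = (Multigraph.toSimple ⟨insert w M.verts,
          s(x, w) ::ₘ s(w, y) ::ₘ M.edges.erase s(x, y)⟩).induce (↑S : Set ℕ) := by
        ext ⟨a, haS⟩ ⟨b, hbS⟩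
        show M.toSimple.Adj a b ↔ (Multigraph.toSimple ⟨insert w M.verts,
          s(x, w) ::ₘ s(w, y) ::ₘ M.edges.erase s(x, y)⟩).Adj a b
        constructor
        · rintro ⟨hab, hmem⟩
          have hne : s(a, b) ≠ s(x, y) := by
            intro hh
            rcases Sym2.eq_iff.1 hh with ⟨h1, _⟩ | ⟨h1, _⟩
            · exact hxS (by rw [← h1]; exact Finset.mem_coe.1 haS)
            · exact hyS (by rw [← h1]; exact Finset.mem_coe.1 haS)
          exact ⟨hab, Multiset.mem_cons_of_mem (Multiset.mem_cons_of_mem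
            ((Multiset.mem_erase_of_ne hne).2 hmem))⟩
        · rintro ⟨hab, hmem⟩
          refine ⟨hab, ?_⟩
          have haw : a ≠ w := fun hh => hwS (hh ▸ Finset.mem_coe.1 haS)
          have hbw : b ≠ w := fun hh => hwS (hh ▸ Finset.mem_coe.1 hbS)
          rcases Multiset.mem_cons.1 hmem with h' | h'
          · exfalso
            have : w ∈ s(a, b) := by rw [h']; simp
            rcases Sym2.mem_iff.1 this with rfl | rfl
            · exact haw rfl
            · exact hbw rfl
          rcases Multiset.mem_cons.1 h' with h' | h'
          · exfalso
            have : w ∈ s(a, b) := by rw [h']; simp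
            rcases Sym2.mem_iff.1 this with rfl | rfl
            · exact haw rfl
            · exact hbw rfl
          · exact Multiset.mem_of_mem_erase h'
      have hSconn' : (M.toSimple.induce (↑S : Set ℕ)).Connected := by
        rw [hind]; exact hSconn
      have hSmax' : ∀ a ∈ S, ∀ b : ℕ, b ∈ (↑M.verts : Set ℕ) \ {u, v} →
          M.toSimple.Adj a b → b ∈ S := by
        intro a haS b hb hadj
        have hne : s(a, b) ≠ s(x, y) := by
          intro hh
          rcases Sym2.eq_iff.1 hh with ⟨h1, _⟩ | ⟨h1, _⟩
          · exact hxS (by rw [← h1]; exact haS)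
          · exact hyS (by rw [← h1]; exact haS)
        refine hSmax a haS b ⟨Finset.mem_coe.2 (Finset.mem_insert_of_mem
          (Finset.mem_coe.1 hb.1)), hb.2⟩ ?_
        exact ⟨hadj.1, Multiset.mem_cons_of_mem (Multiset.mem_cons_of_mem
          ((Multiset.mem_erase_of_ne hne).2 hadj.2))⟩
      have IH' := ih S hSV hSne hSconn' hSmax'
      unfold Multigraph.induce at IH' ⊢
      have hwT : w ∉ insert u (insert v S) := by
        simp [hwu, hwv, hwS]
      have hverts : insert w M.verts ∩ (insert u (insert v S)) =
          M.verts ∩ (insert u (insert v S)) := by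
        ext a
        simp only [Finset.mem_inter, Finset.mem_insert]
        constructor
        · rintro ⟨rfl | h1, h2⟩
          · exact absurd (by simpa using h2) (by simpa using hwT)
          · exact ⟨h1, h2⟩
        · rintro ⟨h1, h2⟩
          exact ⟨Or.inr h1, h2⟩
      rw [hverts]
      have hP1 : ¬ ∀ z ∈ s(x, w), z ∈ insert u (insert v S) :=
        fun hp => hwT (hp w (by simp))
      have hP2 : ¬ ∀ z ∈ s(w, y), z ∈ insert u (insert v S) :=
        fun hp => hwT (hp w (by simp))
      rw [@Multiset.filter_cons_of_neg _ _ (Classical.decPred _) _ _ hP1,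
        @Multiset.filter_cons_of_neg _ _ (Classical.decPred _) _ _ hP2]
      by_cases hPxy : ∀ z ∈ s(x, y), z ∈ insert u (insert v S)
      · have hx2 : x = u ∨ x = v := by
          have := hPxy x (by simp)
          rcases Finset.mem_insert.1 this with rfl | h'
          · exact Or.inl rfl
          rcases Finset.mem_insert.1 h' with rfl | h'
          · exact Or.inr rfl
          · exact absurd h' hxS
        have hy2 : y = u ∨ y = v := by
          have := hPxy y (by simp)
          rcases Finset.mem_insert.1 this with rfl | h'
          · exact Or.inl rfl
          rcases Finset.mem_insert.1 h' with rfl | h'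
          · exact Or.inr rfl
          · exact absurd h' hyS
        have hsxy : s(x, y) = s(u, v) := by
          rcases hx2 with rfl | rfl <;> rcases hy2 with hy' | hy'
          · exact absurd hy'.symm hxy
          · rw [hy']
          · rw [hy']; exact Sym2.eq_swap
          · exact absurd hy'.symm hxy
        rw [@filter_erase_pos _ _ _ (Classical.decPred _) _ hPxy M.edges, hsxy]
        have hmem : s(u, v) ∈ @Multiset.filter _
            (fun e => ∀ z ∈ e, z ∈ insert u (insert v S)) (Classical.decPred _) M.edges := by
          refine (@Multiset.mem_filter _ _ (Classical.decPred _) _ _).2 ⟨hsxy ▸ hee, ?_⟩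
          intro z hz
          rcases Sym2.mem_iff.1 hz with rfl | rfl
          · exact Finset.mem_insert_self _ _
          · exact Finset.mem_insert_of_mem (Finset.mem_insert_self _ _)
        obtain ⟨a0, ha0⟩ := hSne
        obtain ⟨_, _, _, _, i5⟩ := pl_inv IH'
        have ha0V : a0 ∈ M.verts ∩ (insert u (insert v S)) := by
          refine Finset.mem_inter.2 ⟨Finset.mem_coe.1 (hSV (Finset.mem_coe.2 ha0)).1, ?_⟩
          exact Finset.mem_insert_of_mem (Finset.mem_insert_of_mem ha0)
        obtain ⟨e0, he0, ha0e⟩ := i5 a0 ha0V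
        have ha0uv := hSV (Finset.mem_coe.2 ha0)
        have he0ne : e0 ≠ s(u, v) := by
          rintro rfl
          rcases Sym2.mem_iff.1 ha0e with rfl | rfl
          · exact ha0uv.2 (by simp)
          · exact ha0uv.2 (by simp)
        exact pl_undup IH' hmem (two_le_card_of_mem hmem he0 (Ne.symm he0ne))
      · rw [@filter_erase_neg _ _ _ (Classical.decPred _) _ hPxy M.edges]
        exact IH'


/-- If `G` is a 2-connected path-like series-parallel graph with pair of ends `u`, `v`
and `S` is a connected component of `G − {u, v}`, then the subgraph induced by
`{u, v} ∪ S` is again path-like with pair of ends `u`, `v`. -/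
theorem pathLike_induce_component (M : Multigraph) (u v : ℕ)
    (hP : PathLike M u v) (h2conn : TwoConnected M.game)
    (S : Finset ℕ)
    (hS : (↑S : Set ℕ) ⊆ (↑M.verts : Set ℕ) \ {u, v})
    (hSne : S.Nonempty)
    (hSconn : (M.toSimple.induce (↑S : Set ℕ)).Connected)
    (hSmax : ∀ a ∈ S, ∀ b : ℕ, b ∈ (↑M.verts : Set ℕ) \ {u, v} →
      M.toSimple.Adj a b → b ∈ S) :
    PathLike (M.induce (insert u (insert v S))) u v :=
  pl_main hP S hS hSne hSconn hSmax
end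

section
/- Every finite tree with at least two vertices is {x}-exit 1-copwin for every vertex x: a single cop starting at x, in the cops and robber game with exit set {x}, can catch the robber while never allowing the robber to stand alone on x after a cop move. -/
open SimpleGraph

variable {V : Type*}



section AuxTree

open Walk

private lemma tree_path_length_eq_dist {G : SimpleGraph V} (hT : G.IsTree) {a b : V}
    {p : G.Walk a b} (hp : p.IsPath) : p.length = G.dist a b := by
  obtain ⟨q, hq, hql⟩ := hT.isConnected.exists_path_of_dist a b
  rw [(hT.existsUnique_path a b).unique hp hq]; exact hql

private lemma tree_dist_lt_card {G : SimpleGraph V} [Fintype V] (hT : G.IsTree) (a b : V) :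
    G.dist a b < Fintype.card V := by
  obtain ⟨p, hp, hl⟩ := hT.isConnected.exists_path_of_dist a b
  have h1 : p.support.length ≤ Fintype.card V := (isPath_def _ |>.mp hp).length_le_card
  rw [length_support] at h1
  omega

/-- Key tree lemma: if `c` lies on the geodesic from `x` to `r`, `c ≠ r`, `r'` is a
neighbour of `r` not farther from `x` than `r`, then `c` lies on the geodesic from
`x` to `r'`. -/
private lemma tree_key {G : SimpleGraph V} (hT : G.IsTree) {x c r r' : V}
    (hcr : c ≠ r) (hgeo : G.dist x c + G.dist c r = G.dist x r)
    (hadj : G.Adj r r') (hle : G.dist x r' ≤ G.dist x r) :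
    G.dist x c + G.dist c r' = G.dist x r' := by
  classical
  have conn := hT.isConnected
  obtain ⟨q, hq, hql⟩ := conn.exists_path_of_dist x r'
  have hbcr : G.dist c r ≠ 0 :=
    dist_ne_zero_iff_ne_and_reachable.mpr ⟨hcr, conn.preconnected c r⟩
  -- r is not on q
  have hrq : r ∉ q.support := by
    intro hmem
    have h1 : (q.takeUntil r hmem).length = G.dist x r :=
      tree_path_length_eq_dist hT (hq.takeUntil hmem)
    have h2 : (q.dropUntil r hmem).length = G.dist r r' :=
      tree_path_length_eq_dist hT (hq.dropUntil hmem)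
    have h3 := congrArg Walk.length (q.take_spec hmem)
    rw [length_append, h1, h2, hql, dist_eq_one_iff_adj.mpr hadj] at h3
    omega
  -- extend q by the edge r'–r : a path from x to r
  have hqc : (q.concat hadj.symm).IsPath := by
    have hnd : q.support.Nodup := isPath_def _ |>.mp hq
    rw [isPath_def, support_concat]
    simp [List.nodup_append, hnd, hrq]
    exact fun a ha h => hrq (h ▸ ha)
  have hqcl : G.dist x r' + 1 = G.dist x r := by
    have := tree_path_length_eq_dist hT hqc
    rwa [length_concat, hql] at this
  -- geodesic x→c and c→r, appended, is the unique path x→r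
  obtain ⟨p1, hp1, hp1l⟩ := conn.exists_path_of_dist x c
  obtain ⟨p2, hp2, hp2l⟩ := conn.exists_path_of_dist c r
  have hw : (p1.append p2).IsPath := by
    apply Walk.isPath_of_length_eq_dist
    rw [length_append, hp1l, hp2l, hgeo]
  have heqw : p1.append p2 = q.concat hadj.symm :=
    (hT.existsUnique_path x r).unique hw hqc
  have hr'w : r' ∈ (p1.append p2).support := by
    rw [heqw, support_concat]
    exact List.mem_append.mpr (Or.inl q.end_mem_support)
  rcases (mem_support_append_iff _ _).mp hr'w with hmem | hmem
  · -- r' on the x→c geodesic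
    have h1 : (p1.takeUntil r' hmem).length = G.dist x r' :=
      tree_path_length_eq_dist hT (hp1.takeUntil hmem)
    have h2 : (p1.dropUntil r' hmem).length = G.dist r' c :=
      tree_path_length_eq_dist hT (hp1.dropUntil hmem)
    have h3 := congrArg Walk.length (p1.take_spec hmem)
    rw [length_append, h1, h2, hp1l] at h3
    have h4 : G.dist r' c = 0 := by omega
    have h5 : r' = c :=
      (dist_eq_zero_iff_eq_or_not_reachable.mp h4).resolve_right
        (fun h => h (conn.preconnected r' c))
    subst h5
    rw [SimpleGraph.dist_self]
    omega
  · -- r' on the c→r geodesic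
    have h1 : (p2.takeUntil r' hmem).length = G.dist c r' :=
      tree_path_length_eq_dist hT (hp2.takeUntil hmem)
    have h2 : (p2.dropUntil r' hmem).length = G.dist r' r :=
      tree_path_length_eq_dist hT (hp2.dropUntil hmem)
    have h3 := congrArg Walk.length (p2.take_spec hmem)
    rw [length_append, h1, h2, hp2l, dist_eq_one_iff_adj.mpr hadj.symm] at h3
    omega

/-- The cop's next position: one step along a geodesic towards `r`. -/
noncomputable def nxt (G : SimpleGraph V) (c r : V) : V :=
  if h : G.dist c r = 0 then c else (exists_walk_of_dist_ne_zero h).choose.getVert 1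

lemma nxt_self (G : SimpleGraph V) {c r : V} (h : G.dist c r = 0) : nxt G c r = c :=
  dif_pos h

lemma nxt_spec (G : SimpleGraph V) {c r : V} (h : G.dist c r ≠ 0) :
    G.Adj c (nxt G c r) ∧ G.dist (nxt G c r) r + 1 ≤ G.dist c r := by
  rw [nxt, dif_neg h]
  obtain ⟨w, hw⟩ := exists_walk_of_dist_ne_zero h
  set w : G.Walk c r := (exists_walk_of_dist_ne_zero h).choose with hwdef
  have hwl : w.length = G.dist c r := (exists_walk_of_dist_ne_zero h).choose_spec
  have hpos : 0 < w.length := by omega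
  have hadj : G.Adj c (w.getVert 1) := by
    have := w.adj_getVert_succ hpos
    rwa [getVert_zero] at this
  refine ⟨hadj, ?_⟩
  have hnil : ¬ w.Nil := by
    rw [nil_iff_length_eq]; omega
  have htl : w.tail.length + 1 = w.length := length_tail_add_one hnil
  have : G.dist (w.getVert 1) r ≤ w.tail.length := dist_le w.tail
  omega

end AuxTree

/-- Every finite tree with at least two vertices is `{x}`-exit 1-copwin for every
vertex `x`. -/
theorem tree_exit_one_copwin [Fintype V] (G : SimpleGraph V) (hT : G.IsTree)
    (h2 : 2 ≤ Fintype.card V) (x : V) :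
    ExitCopWin G 1 {x} := by
  classical
  have conn := hT.isConnected
  have reach : ∀ a b : V, G.Reachable a b := fun a b => conn.preconnected a b
  intro c₀ hc₀
  have hx0 : c₀ 0 = x := by
    obtain ⟨i, hi⟩ := hc₀ (Set.mem_singleton x)
    rwa [Subsingleton.elim i 0] at hi
  refine ⟨{ init := c₀, move := fun c r _ => nxt G (c 0) r, valid := ?_ }, rfl, ?_⟩
  · intro c r i
    rw [Subsingleton.elim i 0]
    by_cases h : G.dist (c 0) r = 0
    · exact Or.inl (nxt_self G h).symm
    · exact Or.inr (nxt_spec G h).1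
  intro τ
  set σ : CopStrategy G 1 :=
    { init := c₀, move := fun c r _ => nxt G (c 0) r,
      valid := fun c r i => by
        rw [Subsingleton.elim i 0]
        by_cases h : G.dist (c 0) r = 0
        · exact Or.inl (nxt_self G h).symm
        · exact Or.inr (nxt_spec G h).1 } with hσ
  set cop : ℕ → V := fun n => (play σ τ n).1 0 with hcopdef
  set rob : ℕ → V := fun n => (play σ τ n).2 with hrobdef
  have hcs : ∀ n, cop (n + 1) = nxt G (cop n) (rob n) := fun n => rfl
  have hrs : ∀ n, rob n = rob (n + 1) ∨ G.Adj (rob n) (rob (n + 1)) :=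
    fun n => τ.valid _ _
  have claim : ∀ n, (∃ m ≤ n, Caught σ τ m) ∨
      (G.dist x (cop n) + G.dist (cop n) (rob n) = G.dist x (rob n) ∧
        n ≤ G.dist x (cop n)) := by
    intro n
    induction n with
    | zero =>
      right
      have h0 : cop 0 = x := hx0
      rw [h0, dist_self]
      simp
    | succ n ih =>
      rcases ih with ⟨m, hm, hcau⟩ | ⟨hgeo, hn⟩
      · exact Or.inl ⟨m, hm.trans (Nat.le_succ n), hcau⟩
      by_cases hcr : cop n = rob n
      · exact Or.inl ⟨n, Nat.le_succ n, ⟨0, Or.inl hcr⟩⟩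
      have hdcr : G.dist (cop n) (rob n) ≠ 0 :=
        dist_ne_zero_iff_ne_and_reachable.mpr ⟨hcr, reach _ _⟩
      obtain ⟨hadj, hlt⟩ := nxt_spec G hdcr
      rw [← hcs n] at hadj hlt
      have t1 : G.dist x (cop (n + 1)) ≤ G.dist x (cop n) + 1 := by
        have h := conn.dist_triangle (u := x) (v := cop n) (w := cop (n + 1))
        rwa [dist_eq_one_iff_adj.mpr hadj] at h
      have t2 : G.dist x (rob n) ≤ G.dist x (cop (n + 1)) + G.dist (cop (n + 1)) (rob n) :=
        conn.dist_triangle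
      have hA : G.dist x (cop (n + 1)) = G.dist x (cop n) + 1 := by omega
      have hgeo' : G.dist x (cop (n + 1)) + G.dist (cop (n + 1)) (rob n) = G.dist x (rob n) := by
        omega
      by_cases hc'r : cop (n + 1) = rob n
      · exact Or.inl ⟨n, Nat.le_succ n, ⟨0, Or.inr hc'r⟩⟩
      right
      rcases hrs n with heq | hradj
      · rw [← heq]
        exact ⟨hgeo', by omega⟩
      by_cases hle : G.dist x (rob (n + 1)) ≤ G.dist x (rob n)
      · exact ⟨tree_key hT hc'r hgeo' hradj hle, by omega⟩
      have u1 : G.dist x (rob (n + 1)) ≤ G.dist x (rob n) + 1 := by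
        have h := conn.dist_triangle (u := x) (v := rob n) (w := rob (n + 1))
        rwa [dist_eq_one_iff_adj.mpr hradj] at h
      have u2 : G.dist (cop (n + 1)) (rob (n + 1)) ≤ G.dist (cop (n + 1)) (rob n) + 1 := by
        have h := conn.dist_triangle (u := cop (n + 1)) (v := rob n) (w := rob (n + 1))
        rwa [dist_eq_one_iff_adj.mpr hradj] at h
      have u3 : G.dist x (rob (n + 1)) ≤
          G.dist x (cop (n + 1)) + G.dist (cop (n + 1)) (rob (n + 1)) :=
        conn.dist_triangle
      exact ⟨by omega, by omega⟩
  have hex : ∃ m, Caught σ τ m := by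
    rcases claim (Fintype.card V) with ⟨m, _, hm⟩ | ⟨_, hn⟩
    · exact ⟨m, hm⟩
    · have := tree_dist_lt_card hT x (cop (Fintype.card V))
      omega
  refine ⟨Nat.find hex, Nat.find_spec hex, ?_⟩
  rintro m hm ⟨hmx, hne⟩
  have hmx' : rob m = x := hmx
  rcases hm.lt_or_eq with hlt | heq
  · -- before the catch: the invariant holds, so the robber on `x` means he is caught
    rcases claim m with ⟨m', hm', hc'⟩ | ⟨hgeo, _⟩
    · exact Nat.find_min hex (lt_of_le_of_lt hm' hlt) hc'
    · rw [hmx', dist_self] at hgeo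
      have h0 : G.dist (cop m) x = 0 := by omega
      have hcm : cop m = x :=
        (dist_eq_zero_iff_eq_or_not_reachable.mp h0).resolve_right fun h => h (reach _ _)
      have : cop m = rob m := by rw [hcm, hmx']
      exact Nat.find_min hex hlt ⟨0, Or.inl this⟩
  · obtain ⟨i, hi⟩ := Nat.find_spec hex
    rw [Subsingleton.elim i 0, ← heq] at hi
    rcases hi with h1 | h2
    · have h1' : cop m = rob m := h1
      have hz : G.dist (cop m) (rob m) = 0 := by rw [h1', SimpleGraph.dist_self]
      have hcm1 : cop (m + 1) = rob m := by rw [hcs m, nxt_self G hz, h1']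
      exact hne 0 hcm1
    · exact hne 0 h2
end
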